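/- arXiv:math/0407380 — 3 statements merged into one kernel-verified Lean document; each statement's English description precedes it below -/
import Mathlib

section
/- The functions u₀ and u₁ are analytic on U and both satisfy there the differential equation in normal form: for every z ∈ U and for u = u₀ and u = u₁, u″(z) + (a/(4z²) + b/(4(z−1)²) + c/(4z²(z−1)²))·u(z) = 0. -/
open Complex

/-- The Gauss hypergeometric series `₂F₁(p,q;r;z) = ∑_{n≥0} (p)ₙ(q)ₙ/((r)ₙ n!) zⁿ`. -/
noncomputable def hyp2F1 (p q r z : ℂ) : ℂ :=
  ∑' n : ℕ, (Polynomial.eval p (ascPochhammer ℂ n) * Polynomial.eval q (ascPochhammer ℂ n) /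
      (Polynomial.eval r (ascPochhammer ℂ n) * (n.factorial : ℂ))) * z ^ n

/-- The open set `U = {z : |z| < 1, z ∉ ℝ_{≤0}}`. -/
def hypU : Set ℂ := {z : ℂ | ‖z‖ < 1 ∧ ¬(z.im = 0 ∧ z.re ≤ 0)}

/-- `u₀(z) = z^{γ/2} (1−z)^{(α+β−γ+1)/2} ₂F₁(α,β;γ;z)` (principal branches). -/
noncomputable def hypu0 (α β γ : ℚ) (z : ℂ) : ℂ :=
  z ^ ((γ : ℂ) / 2) * (1 - z) ^ (((α : ℂ) + (β : ℂ) - (γ : ℂ) + 1) / 2) *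
    hyp2F1 (α : ℂ) (β : ℂ) (γ : ℂ) z

/-- `u₁(z) = z^{1−γ/2} (1−z)^{(α+β−γ+1)/2} ₂F₁(α−γ+1,β−γ+1;2−γ;z)` (principal branches). -/
noncomputable def hypu1 (α β γ : ℚ) (z : ℂ) : ℂ :=
  z ^ (1 - (γ : ℂ) / 2) * (1 - z) ^ (((α : ℂ) + (β : ℂ) - (γ : ℂ) + 1) / 2) *
    hyp2F1 ((α : ℂ) - (γ : ℂ) + 1) ((β : ℂ) - (γ : ℂ) + 1) (2 - (γ : ℂ)) z

namespace HypAux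

noncomputable def cR (p q r : ℝ) (n : ℕ) : ℝ :=
  (ascPochhammer ℝ n).eval p * (ascPochhammer ℝ n).eval q /
    ((ascPochhammer ℝ n).eval r * n.factorial)

lemma asc_succ (x : ℝ) (n : ℕ) :
    (ascPochhammer ℝ (n+1)).eval x = (ascPochhammer ℝ n).eval x * (x + n) := by
  simp [ascPochhammer_succ_right]

lemma asc_pos {x : ℝ} (hx : 0 < x) (n : ℕ) : 0 < (ascPochhammer ℝ n).eval x := by
  induction n with
  | zero => simp
  | succ n ih =>
      rw [asc_succ]
      exact mul_pos ih (by positivity)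

variable {p q r : ℝ}

lemma cR_zero : cR p q r 0 = 1 := by simp [cR]

lemma cR_pos (hp : 0 < p) (hq : 0 < q) (hr : 0 < r) (n : ℕ) : 0 < cR p q r n :=
  div_pos (mul_pos (asc_pos hp n) (asc_pos hq n))
    (mul_pos (asc_pos hr n) (by exact_mod_cast Nat.factorial_pos n))

lemma cR_rec (hr : 0 < r) (n : ℕ) :
    cR p q r (n+1) * (((n:ℝ)+1) * (r+n)) = cR p q r n * ((p+n) * (q+n)) := by
  have h1 : (ascPochhammer ℝ n).eval r ≠ 0 := (asc_pos hr n).ne'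
  have h2 : (n.factorial : ℝ) ≠ 0 := by exact_mod_cast n.factorial_ne_zero
  have h3 : r + (n:ℝ) ≠ 0 := by positivity
  have h4 : ((n:ℝ)+1) ≠ 0 := by positivity
  unfold cR
  rw [asc_succ, asc_succ, asc_succ, Nat.factorial_succ]
  push_cast
  field_simp

lemma cR_antitone (hp : 0 < p) (hq : 0 < q) (hr : 0 < r)
    (h1 : p + q ≤ 1 + r) (h2 : p * q ≤ r) (n : ℕ) :
    cR p q r (n+1) ≤ cR p q r n := by
  have hrec := cR_rec (p := p) (q := q) hr n
  have hpos := cR_pos hp hq hr n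
  have hpos1 := cR_pos hp hq hr (n+1)
  have hn : (0:ℝ) ≤ (n:ℝ) := Nat.cast_nonneg n
  have hD : (0:ℝ) < ((n:ℝ)+1) * (r+(n:ℝ)) := by positivity
  have hle : (p+(n:ℝ)) * (q+(n:ℝ)) ≤ ((n:ℝ)+1) * (r+(n:ℝ)) := by nlinarith
  have hkey : cR p q r (n+1) * (((n:ℝ)+1) * (r+(n:ℝ))) ≤ cR p q r n * (((n:ℝ)+1) * (r+(n:ℝ))) := by
    rw [hrec]
    exact mul_le_mul_of_nonneg_left hle hpos.le
  exact le_of_mul_le_mul_right hkey hD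

lemma cR_le_one (hp : 0 < p) (hq : 0 < q) (hr : 0 < r)
    (h1 : p + q ≤ 1 + r) (h2 : p * q ≤ r) (n : ℕ) :
    cR p q r n ≤ 1 := by
  induction n with
  | zero => simp [cR_zero]
  | succ n ih => exact le_trans (cR_antitone hp hq hr h1 h2 n) ih

lemma asc_cast (x : ℝ) (n : ℕ) :
    Polynomial.eval (x:ℂ) (ascPochhammer ℂ n) = (((ascPochhammer ℝ n).eval x : ℝ) : ℂ) := by
  rw [ascPochhammer_eval₂ (algebraMap ℝ ℂ)]
  rw [show ((x:ℂ)) = algebraMap ℝ ℂ x from rfl]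
  rw [Polynomial.eval₂_at_apply]
  rfl

lemma hyp2F1_eq (p q r : ℝ) :
    hyp2F1 (p:ℂ) (q:ℂ) (r:ℂ) = fun z : ℂ => ∑' n : ℕ, ((cR p q r n : ℝ) : ℂ) * z ^ n := by
  funext z
  unfold hyp2F1
  congr 1
  funext n
  rw [asc_cast, asc_cast, asc_cast]
  push_cast [cR]
  ring

end HypAux
namespace HypAux

noncomputable def Fc (p q r : ℝ) (z : ℂ) : ℂ := ∑' n : ℕ, ((cR p q r n : ℝ) : ℂ) * z ^ n

noncomputable def Fc1 (p q r : ℝ) (z : ℂ) : ℂ :=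
  ∑' n : ℕ, (n : ℂ) * ((cR p q r n : ℝ) : ℂ) * z ^ (n - 1)

noncomputable def Fc2 (p q r : ℝ) (z : ℂ) : ℂ :=
  ∑' n : ℕ, (n : ℂ) * ((n - 1 : ℕ) : ℂ) * ((cR p q r n : ℝ) : ℂ) * z ^ (n - 2)

lemma summable_geom_aux {x : ℝ} (hx : 0 ≤ x) (hx1 : x < 1) :
    Summable (fun n : ℕ => ((n : ℝ) + 1) ^ 2 * x ^ n) := by
  have hx' : ‖x‖ < 1 := by rwa [Real.norm_eq_abs, _root_.abs_of_nonneg hx]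
  have h2 := summable_pow_mul_geometric_of_norm_lt_one (R := ℝ) 2 hx'
  have h1 := summable_pow_mul_geometric_of_norm_lt_one (R := ℝ) 1 hx'
  have h0 := summable_geometric_of_lt_one hx hx1
  have := (h2.add ((h1.mul_left 2))).add h0
  refine this.congr fun n => ?_
  push_cast
  ring

lemma summable_main {z : ℂ} (hz : ‖z‖ < 1) {b : ℕ → ℂ} {C : ℝ}
    (hb : ∀ n, ‖b n‖ ≤ C * ((n : ℝ) + 1) ^ 2) :
    Summable (fun n : ℕ => b n * z ^ n) := by
  refine Summable.of_norm_bounded (g := fun n : ℕ => C * ((n : ℝ) + 1) ^ 2 * ‖z‖ ^ n) ?_ ?_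
  · have := (summable_geom_aux (norm_nonneg z) hz).mul_left C
    refine this.congr fun n => ?_
    ring
  · intro n
    rw [norm_mul, norm_pow]
    exact mul_le_mul_of_nonneg_right (hb n) (by positivity)

variable {p q r : ℝ}

lemma norm_cC_le (hp : 0 < p) (hq : 0 < q) (hr : 0 < r)
    (h1 : p + q ≤ 1 + r) (h2 : p * q ≤ r) (n : ℕ) :
    ‖((cR p q r n : ℝ) : ℂ)‖ ≤ 1 := by
  rw [Complex.norm_real, Real.norm_eq_abs,
    abs_of_pos (cR_pos hp hq hr n)]
  exact cR_le_one hp hq hr h1 h2 n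

lemma summable_S0 (hp : 0 < p) (hq : 0 < q) (hr : 0 < r)
    (h1 : p + q ≤ 1 + r) (h2 : p * q ≤ r) {z : ℂ} (hz : ‖z‖ < 1) :
    Summable (fun n : ℕ => ((cR p q r n : ℝ) : ℂ) * z ^ n) := by
  refine summable_main hz (C := 1) fun n => ?_
  have := norm_cC_le hp hq hr h1 h2 n
  nlinarith [Nat.cast_nonneg (α := ℝ) n]

lemma summable_S1 (hp : 0 < p) (hq : 0 < q) (hr : 0 < r)
    (h1 : p + q ≤ 1 + r) (h2 : p * q ≤ r) {z : ℂ} (hz : ‖z‖ < 1) :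
    Summable (fun n : ℕ => (n : ℂ) * ((cR p q r n : ℝ) : ℂ) * z ^ (n - 1)) := by
  rw [← summable_nat_add_iff 1]
  simp only [Nat.add_sub_cancel]
  refine summable_main hz (C := 1) fun n => ?_
  rw [norm_mul, Complex.norm_natCast]
  have h := norm_cC_le hp hq hr h1 h2 (n + 1)
  push_cast
  nlinarith [Nat.cast_nonneg (α := ℝ) n, norm_nonneg (((cR p q r (n+1) : ℝ)) : ℂ)]

lemma summable_S2 (hp : 0 < p) (hq : 0 < q) (hr : 0 < r)
    (h1 : p + q ≤ 1 + r) (h2 : p * q ≤ r) {z : ℂ} (hz : ‖z‖ < 1) :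
    Summable (fun n : ℕ => (n : ℂ) * ((n - 1 : ℕ) : ℂ) * ((cR p q r n : ℝ) : ℂ) * z ^ (n - 2)) := by
  rw [← summable_nat_add_iff 2]
  simp only [Nat.add_sub_cancel, show ∀ n : ℕ, n + 2 - 1 = n + 1 from fun n => rfl]
  refine summable_main hz (C := 2) fun n => ?_
  rw [norm_mul, norm_mul, Complex.norm_natCast, Complex.norm_natCast]
  have h := norm_cC_le hp hq hr h1 h2 (n + 2)
  push_cast
  nlinarith [Nat.cast_nonneg (α := ℝ) n, norm_nonneg (((cR p q r (n+2) : ℝ)) : ℂ)]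

end HypAux
namespace HypAux

variable {p q r : ℝ}

lemma summable_u1 {x : ℝ} (hx : 0 ≤ x) (hx1 : x < 1) :
    Summable (fun n : ℕ => (n : ℝ) * x ^ (n - 1)) := by
  rw [← summable_nat_add_iff 1]
  simp only [Nat.add_sub_cancel]
  refine Summable.of_nonneg_of_le (fun n => by positivity)
    (fun n => ?_) (summable_geom_aux hx hx1)
  have hxn : (0:ℝ) ≤ x ^ n := by positivity
  push_cast
  nlinarith [Nat.cast_nonneg (α := ℝ) n,
    mul_le_mul_of_nonneg_right (show ((n:ℝ)+1) ≤ ((n:ℝ)+1)^2 by nlinarith [Nat.cast_nonneg (α := ℝ) n]) hxn]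

lemma summable_u2 {x : ℝ} (hx : 0 ≤ x) (hx1 : x < 1) :
    Summable (fun n : ℕ => (n : ℝ) * ((n - 1 : ℕ) : ℝ) * x ^ (n - 2)) := by
  rw [← summable_nat_add_iff 2]
  simp only [Nat.add_sub_cancel, show ∀ n : ℕ, n + 2 - 1 = n + 1 from fun n => rfl]
  refine Summable.of_nonneg_of_le (fun n => by positivity)
    (fun n => ?_) ((summable_geom_aux hx hx1).mul_left 2)
  have hxn : (0:ℝ) ≤ x ^ n := by positivity
  push_cast
  nlinarith [Nat.cast_nonneg (α := ℝ) n,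
    mul_le_mul_of_nonneg_right (show ((n:ℝ)+2)*((n:ℝ)+1) ≤ 2*((n:ℝ)+1)^2 by nlinarith [Nat.cast_nonneg (α := ℝ) n]) hxn]

lemma hasDerivAt_Fc (hp : 0 < p) (hq : 0 < q) (hr : 0 < r)
    (h1 : p + q ≤ 1 + r) (h2 : p * q ≤ r) {z : ℂ} (hz : ‖z‖ < 1) :
    HasDerivAt (Fc p q r) (Fc1 p q r z) z := by
  set ρ : ℝ := (‖z‖ + 1) / 2 with hρ
  have hρ0 : 0 ≤ ρ := by positivity
  have hρ1 : ρ < 1 := by rw [hρ]; linarith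
  have hzρ : ‖z‖ < ρ := by rw [hρ]; linarith [norm_nonneg z]
  have hρpos : (0:ℝ) < ρ := lt_of_le_of_lt (norm_nonneg z) hzρ
  have key := hasDerivAt_tsum_of_isPreconnected
    (u := fun n : ℕ => (n : ℝ) * ρ ^ (n - 1))
    (g := fun (n : ℕ) (y : ℂ) => ((cR p q r n : ℝ) : ℂ) * y ^ n)
    (g' := fun (n : ℕ) (y : ℂ) => (n : ℂ) * ((cR p q r n : ℝ) : ℂ) * y ^ (n - 1))
    (t := Metric.ball (0:ℂ) ρ) (y₀ := 0) (y := z)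
    (summable_u1 hρ0 hρ1) Metric.isOpen_ball (convex_ball _ _).isPreconnected
    (fun n y _ => by
      have := (hasDerivAt_pow n y).const_mul ((cR p q r n : ℝ) : ℂ)
      exact this.congr_deriv (by ring))
    (fun n y hy => by
      rw [norm_mul, norm_mul, Complex.norm_natCast, norm_pow]
      have hyρ : ‖y‖ ≤ ρ := (mem_ball_zero_iff.mp hy).le
      have h3 : ‖y‖ ^ (n-1) ≤ ρ ^ (n-1) := pow_le_pow_left₀ (norm_nonneg y) hyρ _
      have h4 := norm_cC_le hp hq hr h1 h2 n
      have h5 : (0:ℝ) ≤ ρ ^ (n-1) := by positivity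
      have h6 : (0:ℝ) ≤ ‖(((cR p q r n : ℝ)) : ℂ)‖ := norm_nonneg _
      have h7 : (0:ℝ) ≤ ‖y‖ ^ (n-1) := by positivity
      calc (n:ℝ) * ‖(((cR p q r n : ℝ)) : ℂ)‖ * ‖y‖ ^ (n-1)
          ≤ (n:ℝ) * 1 * ρ ^ (n-1) := by
            apply mul_le_mul (mul_le_mul le_rfl h4 h6 (Nat.cast_nonneg n)) h3 h7
            positivity
        _ = (n:ℝ) * ρ ^ (n-1) := by ring)
    (mem_ball_zero_iff.mpr (by simpa using hρpos))
    (summable_of_ne_finset_zero (s := {0}) (fun n hn => by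
      have : n ≠ 0 := by simpa using hn
      simp [zero_pow this]))
    (mem_ball_zero_iff.mpr hzρ)
  exact key

lemma hasDerivAt_Fc1 (hp : 0 < p) (hq : 0 < q) (hr : 0 < r)
    (h1 : p + q ≤ 1 + r) (h2 : p * q ≤ r) {z : ℂ} (hz : ‖z‖ < 1) :
    HasDerivAt (Fc1 p q r) (Fc2 p q r z) z := by
  set ρ : ℝ := (‖z‖ + 1) / 2 with hρ
  have hρ0 : 0 ≤ ρ := by positivity
  have hρ1 : ρ < 1 := by rw [hρ]; linarith
  have hzρ : ‖z‖ < ρ := by rw [hρ]; linarith [norm_nonneg z]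
  have hρpos : (0:ℝ) < ρ := lt_of_le_of_lt (norm_nonneg z) hzρ
  have key := hasDerivAt_tsum_of_isPreconnected
    (u := fun n : ℕ => (n : ℝ) * ((n - 1 : ℕ) : ℝ) * ρ ^ (n - 2))
    (g := fun (n : ℕ) (y : ℂ) => (n : ℂ) * ((cR p q r n : ℝ) : ℂ) * y ^ (n - 1))
    (g' := fun (n : ℕ) (y : ℂ) =>
      (n : ℂ) * ((n - 1 : ℕ) : ℂ) * ((cR p q r n : ℝ) : ℂ) * y ^ (n - 2))
    (t := Metric.ball (0:ℂ) ρ) (y₀ := 0) (y := z)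
    (summable_u2 hρ0 hρ1) Metric.isOpen_ball (convex_ball _ _).isPreconnected
    (fun n y _ => by
      have := (hasDerivAt_pow (n-1) y).const_mul ((n : ℂ) * ((cR p q r n : ℝ) : ℂ))
      rw [show n - 1 - 1 = n - 2 from by omega] at this
      exact this.congr_deriv (by ring))
    (fun n y hy => by
      rw [norm_mul, norm_mul, norm_mul, Complex.norm_natCast, Complex.norm_natCast, norm_pow]
      have hyρ : ‖y‖ ≤ ρ := (mem_ball_zero_iff.mp hy).le
      have h3 : ‖y‖ ^ (n-2) ≤ ρ ^ (n-2) := pow_le_pow_left₀ (norm_nonneg y) hyρ _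
      have h4 := norm_cC_le hp hq hr h1 h2 n
      have h5 : (0:ℝ) ≤ ρ ^ (n-2) := by positivity
      have h6 : (0:ℝ) ≤ ‖(((cR p q r n : ℝ)) : ℂ)‖ := norm_nonneg _
      have h7 : (0:ℝ) ≤ ‖y‖ ^ (n-2) := by positivity
      have h8 : (0:ℝ) ≤ (n:ℝ) * ((n-1:ℕ):ℝ) := by positivity
      calc (n:ℝ) * ((n-1:ℕ):ℝ) * ‖(((cR p q r n : ℝ)) : ℂ)‖ * ‖y‖ ^ (n-2)
          ≤ (n:ℝ) * ((n-1:ℕ):ℝ) * 1 * ρ ^ (n-2) := by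
            apply mul_le_mul (mul_le_mul le_rfl h4 h6 h8) h3 h7
            positivity
        _ = (n:ℝ) * ((n-1:ℕ):ℝ) * ρ ^ (n-2) := by ring)
    (mem_ball_zero_iff.mpr (by simpa using hρpos))
    (summable_of_ne_finset_zero (s := {0, 1}) (fun n hn => by
      have : n - 1 ≠ 0 := by simp at hn; omega
      simp [zero_pow this]))
    (mem_ball_zero_iff.mpr hzρ)
  exact key

end HypAux
namespace HypAux

variable {p q r : ℝ}

lemma cR_recC (hr : 0 < r) (n : ℕ) :
    ((cR p q r (n+1) : ℝ) : ℂ) * (((n:ℂ)+1) * ((r:ℂ)+n)) =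
      ((cR p q r n : ℝ) : ℂ) * (((p:ℂ)+n) * ((q:ℂ)+n)) := by
  have := cR_rec (p := p) (q := q) hr n
  exact_mod_cast congrArg (fun x : ℝ => (x : ℂ)) this

lemma ode (hp : 0 < p) (hq : 0 < q) (hr : 0 < r)
    (h1 : p + q ≤ 1 + r) (h2 : p * q ≤ r) {z : ℂ} (hz : ‖z‖ < 1) :
    z * (1 - z) * Fc2 p q r z + ((r:ℂ) - ((p:ℂ) + (q:ℂ) + 1) * z) * Fc1 p q r z
      - (p:ℂ) * (q:ℂ) * Fc p q r z = 0 := by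
  classical
  set w : ℂ := (r:ℂ) - ((p:ℂ) + (q:ℂ) + 1) * z with hw
  set d : ℕ → ℂ := fun n => ((n:ℂ) + p) * ((n:ℂ) + q) * ((cR p q r n : ℝ) : ℂ) * z ^ n with hd
  set tt : ℕ → ℂ := fun n =>
    z * (1 - z) * ((n : ℂ) * ((n - 1 : ℕ) : ℂ) * ((cR p q r n : ℝ) : ℂ) * z ^ (n - 2))
      + w * ((n : ℂ) * ((cR p q r n : ℝ) : ℂ) * z ^ (n - 1))
      - (p:ℂ) * (q:ℂ) * (((cR p q r n : ℝ) : ℂ) * z ^ n) with htt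
  have hS0 := summable_S0 hp hq hr h1 h2 hz
  have hS1 := summable_S1 hp hq hr h1 h2 hz
  have hS2 := summable_S2 hp hq hr h1 h2 hz
  have hsum : Summable tt := ((hS2.mul_left (z * (1 - z))).add (hS1.mul_left w)).sub
    (hS0.mul_left ((p:ℂ) * (q:ℂ)))
  have hLHS : z * (1 - z) * Fc2 p q r z + w * Fc1 p q r z
      - (p:ℂ) * (q:ℂ) * Fc p q r z = ∑' n, tt n := by
    unfold Fc Fc1 Fc2
    rw [← tsum_mul_left, ← tsum_mul_left, ← tsum_mul_left,
      ← Summable.tsum_add (hS2.mul_left _) (hS1.mul_left _),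
      ← Summable.tsum_sub (((hS2.mul_left _).add (hS1.mul_left _))) (hS0.mul_left _)]
  -- key step identity
  have hkey : ∀ n : ℕ, tt (n + 1) = d n - d (n + 1) := by
    intro n
    match n with
    | 0 =>
      have hrec := cR_recC (p := p) (q := q) hr 0
      simp only [htt, hd]
      push_cast [cR_zero]
      push_cast [cR_zero] at hrec
      ring_nf
      ring_nf at hrec
      linear_combination hrec
    | m + 1 =>
      have hrec := cR_recC (p := p) (q := q) hr (m + 1)
      simp only [htt, hd, show m + 1 + 1 - 2 = m from by omega,
        show m + 1 + 1 - 1 = m + 1 from by omega, show m + 1 - 1 = m from by omega]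
      push_cast
      push_cast at hrec
      linear_combination (z ^ (m + 1)) * hrec
  have hpartial : ∀ N : ℕ, ∑ i ∈ Finset.range (N + 1), tt i = -d N := by
    intro N
    induction N with
    | zero =>
      rw [Finset.sum_range_one]
      simp only [htt, hd]
      push_cast [cR_zero]
      norm_num
    | succ N ih =>
      rw [Finset.sum_range_succ, ih, hkey N]
      ring
  have hdsum : Summable d := by
    refine summable_main hz (C := (1 + p) * (1 + q)) fun n => ?_
    have e1 : ((n:ℂ) + p) = ((((n:ℝ) + p) : ℝ) : ℂ) := by push_cast; ring
    have e2 : ((n:ℂ) + q) = ((((n:ℝ) + q) : ℝ) : ℂ) := by push_cast; ring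
    rw [norm_mul, norm_mul, e1, e2, Complex.norm_real, Complex.norm_real,
      Real.norm_eq_abs, Real.norm_eq_abs,
      _root_.abs_of_pos (by positivity), _root_.abs_of_pos (by positivity)]
    have hc := norm_cC_le hp hq hr h1 h2 n
    have hc0 : (0:ℝ) ≤ ‖(((cR p q r n : ℝ)) : ℂ)‖ := norm_nonneg _
    have hn : (0:ℝ) ≤ (n:ℝ) := Nat.cast_nonneg n
    have hA : (n:ℝ) + p ≤ (1+p) * ((n:ℝ)+1) := by nlinarith
    have hB : (n:ℝ) + q ≤ (1+q) * ((n:ℝ)+1) := by nlinarith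
    have hAB : ((n:ℝ)+p) * ((n:ℝ)+q) ≤ ((1+p)*((n:ℝ)+1)) * ((1+q)*((n:ℝ)+1)) :=
      mul_le_mul hA hB (by positivity) (by positivity)
    nlinarith [mul_le_mul_of_nonneg_left hc (show (0:ℝ) ≤ ((n:ℝ)+p)*((n:ℝ)+q) by positivity)]
  have hd0 : Filter.Tendsto d Filter.atTop (nhds 0) := hdsum.tendsto_atTop_zero
  have ht1 : Filter.Tendsto (fun N => ∑ i ∈ Finset.range (N + 1), tt i)
      Filter.atTop (nhds (∑' n, tt n)) :=
    hsum.hasSum.tendsto_sum_nat.comp (Filter.tendsto_add_atTop_nat 1)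
  have ht2 : Filter.Tendsto (fun N => ∑ i ∈ Finset.range (N + 1), tt i)
      Filter.atTop (nhds 0) := by
    simp only [hpartial]
    simpa using hd0.neg
  rw [hLHS, tendsto_nhds_unique ht1 ht2]

end HypAux
namespace HypAux

lemma hypU_open : IsOpen hypU := by
  have : hypU = ((fun z : ℂ => ‖z‖) ⁻¹' Set.Iio 1) ∩ Complex.slitPlane := by
    ext z
    simp only [hypU, Set.mem_inter_iff, Set.mem_preimage, Set.mem_Iio,
      Complex.mem_slitPlane_iff, Set.mem_setOf_eq]
    constructor
    · rintro ⟨ha, hb⟩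
      refine ⟨ha, ?_⟩
      by_contra h
      push_neg at h
      exact hb ⟨h.2, h.1⟩
    · rintro ⟨ha, hb⟩
      refine ⟨ha, fun hcon => ?_⟩
      rcases hb with h | h
      · exact absurd hcon.2 (not_le.mpr h)
      · exact h hcon.1
  rw [this]
  exact (isOpen_Iio.preimage continuous_norm).inter Complex.isOpen_slitPlane

lemma hypU_norm {z : ℂ} (hz : z ∈ hypU) : ‖z‖ < 1 := by
  exact hz.1

lemma hypU_slit {z : ℂ} (hz : z ∈ hypU) : z ∈ Complex.slitPlane := by
  rw [Complex.mem_slitPlane_iff]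
  by_contra h
  push_neg at h
  exact hz.2 ⟨h.2, h.1⟩

lemma hypU_slit1 {z : ℂ} (hz : z ∈ hypU) : 1 - z ∈ Complex.slitPlane := by
  rw [Complex.mem_slitPlane_iff]
  left
  have h1 : z.re ≤ ‖z‖ := Complex.re_le_norm z
  have : (1 - z).re = 1 - z.re := by simp [Complex.sub_re]
  rw [this]
  have := hz.1
  linarith

lemma hypU_ne0 {z : ℂ} (hz : z ∈ hypU) : z ≠ 0 := by
  intro h
  have := hypU_slit hz
  rw [h] at this
  exact Complex.zero_notMem_slitPlane this

lemma hypU_ne1 {z : ℂ} (hz : z ∈ hypU) : 1 - z ≠ 0 := by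
  intro h
  have := hypU_slit1 hz
  rw [h] at this
  exact Complex.zero_notMem_slitPlane this

lemma cpow_step {z : ℂ} (hz : z ≠ 0) (e : ℂ) : z ^ (e - 1) * z = z ^ e := by
  have h := (Complex.cpow_add (e - 1) 1 hz).symm
  rw [Complex.cpow_one] at h
  rw [show e - 1 + 1 = e by ring] at h
  exact h

set_option maxHeartbeats 1000000 in
lemma normal_aux (p q r : ℝ) (hp : 0 < p) (hq : 0 < q) (hr : 0 < r)
    (h1 : p + q ≤ 1 + r) (h2 : p * q ≤ r) (s t a b c : ℂ)
    (hs2 : 2 * s = (r:ℂ)) (hst2 : 2 * s + 2 * t = (p:ℂ) + (q:ℂ) + 1)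
    (hQpoly : ∀ z : ℂ, 4*s*(s-1)*(1-z)^2 + 4*t*(t-1)*z^2 - 8*s*t*z*(1-z)
      + a*(1-z)^2 + b*z^2 + c + 4*(p:ℂ)*(q:ℂ)*z*(1-z) = 0) :
    AnalyticOnNhd ℂ (fun z : ℂ => z ^ s * (1 - z) ^ t * Fc p q r z) hypU ∧
    ∀ z ∈ hypU,
      deriv (deriv (fun z : ℂ => z ^ s * (1 - z) ^ t * Fc p q r z)) z +
        (a / (4 * z ^ 2) + b / (4 * (z - 1) ^ 2) + c / (4 * z ^ 2 * (z - 1) ^ 2)) *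
          (z ^ s * (1 - z) ^ t * Fc p q r z) = 0 := by
  have hu' : ∀ z ∈ hypU, HasDerivAt (fun z : ℂ => z ^ s * (1 - z) ^ t * Fc p q r z)
      ((s * z ^ (s-1) * (1 - z) ^ t + z ^ s * (t * (1 - z) ^ (t-1) * -1)) * Fc p q r z
        + z ^ s * (1 - z) ^ t * Fc1 p q r z) z := by
    intro z hz
    have h₁ : HasDerivAt (fun y : ℂ => y ^ s) (s * z ^ (s - 1)) z :=
      (Complex.hasStrictDerivAt_cpow_const (hypU_slit hz)).hasDerivAt
    have h₂ : HasDerivAt (fun y : ℂ => (1 - y) ^ t) (t * (1 - z) ^ (t - 1) * -1) z :=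
      HasDerivAt.cpow_const ((hasDerivAt_id z).const_sub 1) (hypU_slit1 hz)
    have h₃ := hasDerivAt_Fc hp hq hr h1 h2 (hypU_norm hz)
    exact (h₁.mul h₂).mul h₃
  constructor
  · exact DifferentiableOn.analyticOnNhd
      (fun z hz => (hu' z hz).differentiableAt.differentiableWithinAt) hypU_open
  intro z hz
  have hzn := hypU_norm hz
  have hz0 := hypU_ne0 hz
  have hz1 := hypU_ne1 hz
  have hz1' : z - 1 ≠ 0 := fun h => hz1 (by linear_combination -h)
  have hev : deriv (fun z : ℂ => z ^ s * (1 - z) ^ t * Fc p q r z) =ᶠ[nhds z]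
      (fun z : ℂ => (s * z ^ (s-1) * (1 - z) ^ t + z ^ s * (t * (1 - z) ^ (t-1) * -1)) * Fc p q r z
        + z ^ s * (1 - z) ^ t * Fc1 p q r z) := by
    filter_upwards [hypU_open.mem_nhds hz] with y hy using (hu' y hy).deriv
  have hdd := Filter.EventuallyEq.deriv_eq hev
  have h₁ : HasDerivAt (fun y : ℂ => y ^ s) (s * z ^ (s - 1)) z :=
    (Complex.hasStrictDerivAt_cpow_const (hypU_slit hz)).hasDerivAt
  have h₂ : HasDerivAt (fun y : ℂ => (1 - y) ^ t) (t * (1 - z) ^ (t - 1) * -1) z :=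
    HasDerivAt.cpow_const ((hasDerivAt_id z).const_sub 1) (hypU_slit1 hz)
  have h₃ := hasDerivAt_Fc hp hq hr h1 h2 hzn
  have h₄ := hasDerivAt_Fc1 hp hq hr h1 h2 hzn
  have hA1 : HasDerivAt (fun y : ℂ => s * y ^ (s-1) * (1 - y) ^ t)
      ((s * ((s-1) * z ^ (s-1-1))) * (1 - z) ^ t
        + (s * z ^ (s-1)) * (t * (1 - z) ^ (t-1) * -1)) z :=
    (((Complex.hasStrictDerivAt_cpow_const (hypU_slit hz)).hasDerivAt.const_mul s).mul h₂)
  have hC : HasDerivAt (fun y : ℂ => t * (1 - y) ^ (t-1))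
      (t * ((t-1) * (1 - z) ^ (t-1-1) * -1)) z :=
    (HasDerivAt.cpow_const ((hasDerivAt_id z).const_sub 1) (hypU_slit1 hz)).const_mul t
  have hA2 : HasDerivAt (fun y : ℂ => y ^ s * (t * (1 - y) ^ (t-1) * -1))
      ((s * z ^ (s-1)) * (t * (1 - z) ^ (t-1) * -1)
        + z ^ s * (t * ((t-1) * (1 - z) ^ (t-1-1) * -1) * -1)) z :=
    h₁.mul (hC.mul_const (-1))
  have hvder := ((hA1.add hA2).mul h₃).add ((h₁.mul h₂).mul h₄)
  have hvder' : HasDerivAt (fun z : ℂ => (s * z ^ (s-1) * (1 - z) ^ t + z ^ s * (t * (1 - z) ^ (t-1) * -1)) * Fc p q r z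
          + z ^ s * (1 - z) ^ t * Fc1 p q r z) _ z := hvder
  rw [hdd, hvder'.deriv]
  simp only [Pi.add_apply, Pi.mul_apply]
  have hden1 : (4 * z ^ 2 : ℂ) ≠ 0 := by
    exact mul_ne_zero (by norm_num) (pow_ne_zero 2 hz0)
  have hden2 : (4 * (z - 1) ^ 2 : ℂ) ≠ 0 := by
    exact mul_ne_zero (by norm_num) (pow_ne_zero 2 hz1')
  have hden3 : (4 * z ^ 2 * (z - 1) ^ 2 : ℂ) ≠ 0 :=
    mul_ne_zero hden1 (pow_ne_zero 2 hz1')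
  have hQN : a / (4 * z ^ 2) + b / (4 * (z - 1) ^ 2) + c / (4 * z ^ 2 * (z - 1) ^ 2)
      = (a * (z - 1) ^ 2 + b * z ^ 2 + c) / (4 * z ^ 2 * (z - 1) ^ 2) := by
    rw [div_add_div _ _ hden1 hden2, div_add_div _ _ (mul_ne_zero hden1 hden2) hden3,
      div_eq_div_iff (mul_ne_zero (mul_ne_zero hden1 hden2) hden3) hden3]
    ring
  rw [hQN, div_mul_eq_mul_div, add_comm, add_eq_zero_iff_eq_neg, div_eq_iff hden3]
  have hE1 := cpow_step hz0 s
  have hE2 := cpow_step hz0 (s - 1)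
  have hE3 := cpow_step hz1 t
  have hE4 := cpow_step hz1 (t - 1)
  rw [← hE1, ← hE2, ← hE3, ← hE4]
  have hODEz := ode hp hq hr h1 h2 hzn
  have hQz := hQpoly z
  linear_combination
    (4 * z^3 * (1-z)^3 * (z ^ (s-1-1)) * ((1-z) ^ (t-1-1))) * hODEz
    + (z^2 * (1-z)^2 * (z ^ (s-1-1)) * ((1-z) ^ (t-1-1)) * (Fc p q r z)) * hQz
    + (4 * z^3 * (1-z)^3 * (z ^ (s-1-1)) * ((1-z) ^ (t-1-1)) * (Fc1 p q r z)) * hs2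
    + (-(4 * z^4 * (1-z)^3 * (z ^ (s-1-1)) * ((1-z) ^ (t-1-1)) * (Fc1 p q r z))) * hst2

end HypAux
namespace HypAux

lemma hyp2F1_eq_Fc (p q r : ℝ) : hyp2F1 (p:ℂ) (q:ℂ) (r:ℂ) = Fc p q r :=
  hyp2F1_eq p q r

end HypAux


set_option maxHeartbeats 1000000

/-- `u₀` and `u₁` are analytic on `U` and satisfy there the differential
equation in normal form `u″ + (a/(4z²) + b/(4(z−1)²) + c/(4z²(z−1)²)) u = 0`. -/
theorem stmt_2 (α β γ : ℚ)
    (hα : ∃ n : ℕ, 0 < n ∧ α = 1 / n) (hβ : ∃ n : ℕ, 0 < n ∧ β = 1 / n)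
    (hγ : ∃ n : ℕ, 0 < n ∧ γ = 1 / n)
    (h0 : 0 < α) (h1 : α < β) (h2 : β < γ) (h3 : γ < 1) (h4 : α + β < γ)
    (a b c : ℂ)
    (ha : a = (γ : ℂ) * (1 - (α : ℂ) - (β : ℂ)) + 2 * (α : ℂ) * (β : ℂ))
    (hb : b = ((α : ℂ) + (β : ℂ)) * ((γ : ℂ) - (α : ℂ) - (β : ℂ)) +
        2 * (α : ℂ) * (β : ℂ) - (γ : ℂ) + 1)
    (hc : c = (γ : ℂ) * ((α : ℂ) + (β : ℂ) - (γ : ℂ) + 1) - 2 * (α : ℂ) * (β : ℂ)) :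
    AnalyticOnNhd ℂ (hypu0 α β γ) hypU ∧ AnalyticOnNhd ℂ (hypu1 α β γ) hypU ∧
      (∀ z ∈ hypU,
        deriv (deriv (hypu0 α β γ)) z +
          (a / (4 * z ^ 2) + b / (4 * (z - 1) ^ 2) + c / (4 * z ^ 2 * (z - 1) ^ 2)) *
            hypu0 α β γ z = 0) ∧
      (∀ z ∈ hypU,
        deriv (deriv (hypu1 α β γ)) z +
          (a / (4 * z ^ 2) + b / (4 * (z - 1) ^ 2) + c / (4 * z ^ 2 * (z - 1) ^ 2)) *
            hypu1 α β γ z = 0) := by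
  have hα' : (0:ℝ) < (α:ℝ) := by exact_mod_cast h0
  have hβ' : (α:ℝ) < (β:ℝ) := by exact_mod_cast h1
  have hγ' : (β:ℝ) < (γ:ℝ) := by exact_mod_cast h2
  have hγ1 : (γ:ℝ) < 1 := by exact_mod_cast h3
  have hαβγ : (α:ℝ) + (β:ℝ) < (γ:ℝ) := by exact_mod_cast h4
  have H0 := HypAux.normal_aux (α:ℝ) (β:ℝ) (γ:ℝ)
    hα' (by linarith) (by linarith) (by linarith)
    (by nlinarith)
    ((γ:ℂ)/2) (((α:ℂ)+(β:ℂ)-(γ:ℂ)+1)/2) a b c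
    (by push_cast; ring)
    (by push_cast; ring)
    (by
      intro z
      subst ha hb hc
      push_cast
      ring)
  have H1 := HypAux.normal_aux ((α:ℝ)-(γ:ℝ)+1) ((β:ℝ)-(γ:ℝ)+1) (2-(γ:ℝ))
    (by linarith) (by linarith) (by linarith) (by linarith)
    (by nlinarith)
    (1-(γ:ℂ)/2) (((α:ℂ)+(β:ℂ)-(γ:ℂ)+1)/2) a b c
    (by push_cast; ring)
    (by push_cast; ring)
    (by
      intro z
      subst ha hb hc
      push_cast
      ring)
  have e0 : hypu0 α β γ = fun z : ℂ =>
      z ^ ((γ:ℂ)/2) * (1-z) ^ (((α:ℂ)+(β:ℂ)-(γ:ℂ)+1)/2) * HypAux.Fc (α:ℝ) (β:ℝ) (γ:ℝ) z := by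
    funext z
    unfold hypu0
    rw [← HypAux.hyp2F1_eq_Fc]
    push_cast
    rfl
  have e1 : hypu1 α β γ = fun z : ℂ =>
      z ^ (1-(γ:ℂ)/2) * (1-z) ^ (((α:ℂ)+(β:ℂ)-(γ:ℂ)+1)/2) *
        HypAux.Fc ((α:ℝ)-(γ:ℝ)+1) ((β:ℝ)-(γ:ℝ)+1) (2-(γ:ℝ)) z := by
    funext z
    unfold hypu1
    rw [← HypAux.hyp2F1_eq_Fc]
    push_cast
    rfl
  rw [e0, e1]
  exact ⟨H0.1, H1.1, H0.2, H1.2⟩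
end

section
/- Let V ⊆ ℂ be open with 0 ∉ V and 1 ∉ V, and let u : ℂ → ℂ be twice differentiable on V satisfying, for every z ∈ V, u″(z) + (a/(4z²) + b/(4(z−1)²) + c/(4z²(z−1)²))·u(z) = 0. Define on V the functions y₀ = u·u′, y₁ = u·u′ − u²/z, y₂ = u·u′ − u²/(z−1), and L = (1/4)·(a(y₀−y₁)² + b(y₀−y₂)² + c(y₁−y₂)²). Then for every z ∈ V and every i ∈ {0,1,2}: u(z)²·yᵢ′(z) = yᵢ(z)² − L(z). -/
open Complex

/-- `y₀ = u·u′`. -/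
noncomputable def yfun0 (u : ℂ → ℂ) (z : ℂ) : ℂ := u z * deriv u z

/-- `y₁ = u·u′ − u²/z`. -/
noncomputable def yfun1 (u : ℂ → ℂ) (z : ℂ) : ℂ := u z * deriv u z - (u z) ^ 2 / z

/-- `y₂ = u·u′ − u²/(z−1)`. -/
noncomputable def yfun2 (u : ℂ → ℂ) (z : ℂ) : ℂ := u z * deriv u z - (u z) ^ 2 / (z - 1)

/-- `L = (1/4)(a(y₀−y₁)² + b(y₀−y₂)² + c(y₁−y₂)²)`. -/
noncomputable def Lfun (a b c : ℂ) (u : ℂ → ℂ) (z : ℂ) : ℂ :=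
  (1 / 4) * (a * (yfun0 u z - yfun1 u z) ^ 2 + b * (yfun0 u z - yfun2 u z) ^ 2 +
    c * (yfun1 u z - yfun2 u z) ^ 2)

/-- if `u` is twice differentiable on an open set `V ⊆ ℂ` avoiding `0` and `1`,
and satisfies there `u″ + (a/(4z²) + b/(4(z−1)²) + c/(4z²(z−1)²)) u = 0`, then the functions
`y₀ = u u′`, `y₁ = u u′ − u²/z`, `y₂ = u u′ − u²/(z−1)` satisfy `u² yᵢ′ = yᵢ² − L` on `V`,
where `L = (1/4)(a(y₀−y₁)² + b(y₀−y₂)² + c(y₁−y₂)²)`. -/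
theorem stmt_4 (α β γ : ℚ)
    (hα : ∃ n : ℕ, 0 < n ∧ α = 1 / n) (hβ : ∃ n : ℕ, 0 < n ∧ β = 1 / n)
    (hγ : ∃ n : ℕ, 0 < n ∧ γ = 1 / n)
    (h0 : 0 < α) (h1 : α < β) (h2 : β < γ) (h3 : γ < 1) (h4 : α + β < γ)
    (a b c : ℂ)
    (ha : a = (γ : ℂ) * (1 - (α : ℂ) - (β : ℂ)) + 2 * (α : ℂ) * (β : ℂ))
    (hb : b = ((α : ℂ) + (β : ℂ)) * ((γ : ℂ) - (α : ℂ) - (β : ℂ)) +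
        2 * (α : ℂ) * (β : ℂ) - (γ : ℂ) + 1)
    (hc : c = (γ : ℂ) * ((α : ℂ) + (β : ℂ) - (γ : ℂ) + 1) - 2 * (α : ℂ) * (β : ℂ))
    (V : Set ℂ) (hV : IsOpen V) (h0V : (0 : ℂ) ∉ V) (h1V : (1 : ℂ) ∉ V)
    (u : ℂ → ℂ)
    (hdiff : ∀ z ∈ V, DifferentiableAt ℂ u z ∧ DifferentiableAt ℂ (deriv u) z)
    (hode : ∀ z ∈ V,
      deriv (deriv u) z +
        (a / (4 * z ^ 2) + b / (4 * (z - 1) ^ 2) + c / (4 * z ^ 2 * (z - 1) ^ 2)) * u z = 0) :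
    ∀ z ∈ V,
      (u z) ^ 2 * deriv (yfun0 u) z = (yfun0 u z) ^ 2 - Lfun a b c u z ∧
      (u z) ^ 2 * deriv (yfun1 u) z = (yfun1 u z) ^ 2 - Lfun a b c u z ∧
      (u z) ^ 2 * deriv (yfun2 u) z = (yfun2 u z) ^ 2 - Lfun a b c u z := by
  intro z hzV
  obtain ⟨hu, hu'⟩ := hdiff z hzV
  have hz0 : z ≠ 0 := fun h => h0V (h ▸ hzV)
  have hz1 : z - 1 ≠ 0 := sub_ne_zero.mpr (fun h => h1V (h ▸ hzV))
  have hsq : HasDerivAt (fun w => (u w) ^ 2) (2 * u z * deriv u z) z := by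
    have := hu.hasDerivAt.fun_pow 2
    simpa [mul_comm] using this
  have hy0 : HasDerivAt (yfun0 u)
      (deriv u z * deriv u z + u z * deriv (deriv u) z) z :=
    hu.hasDerivAt.mul hu'.hasDerivAt
  have hd1 : HasDerivAt (fun w => (u w) ^ 2 / w)
      ((2 * u z * deriv u z * z - (u z) ^ 2 * 1) / z ^ 2) z :=
    hsq.div (hasDerivAt_id z) hz0
  have hd2 : HasDerivAt (fun w => (u w) ^ 2 / (w - 1))
      ((2 * u z * deriv u z * (z - 1) - (u z) ^ 2 * 1) / (z - 1) ^ 2) z :=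
    hsq.div ((hasDerivAt_id z).sub_const 1) hz1
  have hy1 : HasDerivAt (yfun1 u)
      ((deriv u z * deriv u z + u z * deriv (deriv u) z) -
        (2 * u z * deriv u z * z - (u z) ^ 2 * 1) / z ^ 2) z := hy0.sub hd1
  have hy2 : HasDerivAt (yfun2 u)
      ((deriv u z * deriv u z + u z * deriv (deriv u) z) -
        (2 * u z * deriv u z * (z - 1) - (u z) ^ 2 * 1) / (z - 1) ^ 2) z := hy0.sub hd2
  have hode' : deriv (deriv u) z =
      -(a / (4 * z ^ 2) + b / (4 * (z - 1) ^ 2) + c / (4 * z ^ 2 * (z - 1) ^ 2)) * u z := by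
    have := hode z hzV
    linear_combination this
  have hz : z * z⁻¹ = 1 := mul_inv_cancel₀ hz0
  have hw : (z - 1) * (z - 1)⁻¹ = 1 := mul_inv_cancel₀ hz1
  have hA : ((4:ℂ) * z ^ 2)⁻¹ = 4⁻¹ * (z⁻¹ * z⁻¹) := by
    rw [mul_inv, sq, mul_inv]
  have hB : ((4:ℂ) * (z - 1) ^ 2)⁻¹ = 4⁻¹ * ((z - 1)⁻¹ * (z - 1)⁻¹) := by
    rw [mul_inv, sq, mul_inv]
  have hC : ((4:ℂ) * z ^ 2 * (z - 1) ^ 2)⁻¹ = 4⁻¹ * (z⁻¹ * z⁻¹) * ((z - 1)⁻¹ * (z - 1)⁻¹) := by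
    rw [mul_inv, mul_inv, sq, sq, mul_inv, mul_inv]
  have hq : (((z : ℂ) - 1) ^ 2)⁻¹ = (z - 1)⁻¹ * (z - 1)⁻¹ := by rw [sq, mul_inv]
  have hL : Lfun a b c u z = (u z) ^ 4 *
      (a / (4 * z ^ 2) + b / (4 * (z - 1) ^ 2) + c / (4 * z ^ 2 * (z - 1) ^ 2)) := by
    simp only [Lfun, yfun0, yfun1, yfun2, div_eq_mul_inv]
    linear_combination (-(u z) ^ 4 * a) * hA + (-(u z) ^ 4 * b) * hB + (-(u z) ^ 4 * c) * hC
      + (-(c / 4) * (u z) ^ 4 * ((z - 1)⁻¹ - z⁻¹ + z⁻¹ * (z - 1)⁻¹) * (z - 1)⁻¹) * hz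
      + ((c / 4) * (u z) ^ 4 * ((z - 1)⁻¹ - z⁻¹ + z⁻¹ * (z - 1)⁻¹) * z⁻¹) * hw
  refine ⟨?_, ?_, ?_⟩
  · rw [hy0.deriv, hL]
    simp only [yfun0]
    linear_combination (u z) ^ 3 * hode z hzV
  · rw [hy1.deriv, hL]
    simp only [yfun1]
    linear_combination (u z) ^ 3 * hode z hzV
      + (-2 * (u z) ^ 3 * deriv u z * z⁻¹) * hz
  · rw [hy2.deriv, hL]
    simp only [yfun2]
    linear_combination (u z) ^ 3 * hode z hzV
      + (-2 * (u z) ^ 3 * deriv u z * (z - 1) + (u z) ^ 4) * hq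
      + (-2 * (u z) ^ 3 * deriv u z * (z - 1)⁻¹) * hw
end

section
/- Set θ = Γ(γ)Γ(γ−α−β)/(Γ(γ−α)Γ(γ−β)). As the real variable x tends to 1 from the left within the interval (0,1), the following limits hold: u₀(x)²·(1−x)^{−(1+α+β−γ)} → θ², y₀(x)·(1−x)^{γ−α−β} → −(θ²/2)(α+β−γ+1), y₁(x)·(1−x)^{γ−α−β} → −(θ²/2)(α+β−γ+1), and y₂(x)·(1−x)^{γ−α−β} → −(θ²/2)(α+β−γ−1). -/
open Complex Filter
open scoped Topology

namespace Stmt6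
open MeasureTheory intervalIntegral

/-- Pochhammer value. -/
noncomputable def pr (x : ℝ) (n : ℕ) : ℝ := (ascPochhammer ℝ n).eval x

lemma pr_zero (x : ℝ) : pr x 0 = 1 := by simp [pr]

lemma pr_succ (x : ℝ) (n : ℕ) : pr x (n + 1) = pr x n * (x + n) := by
  simp [pr, ascPochhammer_succ_right]

lemma pr_pos {x : ℝ} (hx : 0 < x) (n : ℕ) : 0 < pr x n := ascPochhammer_pos n x hx

/-- Coefficients of the hypergeometric series. -/
noncomputable def Cf (a b c : ℝ) (n : ℕ) : ℝ :=
  pr a n * pr b n / (pr c n * n.factorial)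

lemma Cf_pos {a b c : ℝ} (ha : 0 < a) (hb : 0 < b) (hc : 0 < c) (n : ℕ) :
    0 < Cf a b c n :=
  div_pos (mul_pos (pr_pos ha n) (pr_pos hb n))
    (mul_pos (pr_pos hc n) (by positivity))

lemma Cf_succ {a b c : ℝ} (hc : 0 < c) (n : ℕ) :
    Cf a b c (n + 1) = Cf a b c n * ((a + n) * (b + n) / ((c + n) * (n + 1))) := by
  have h1 : pr c n ≠ 0 := (pr_pos hc n).ne'
  have h2 : (c + n) ≠ 0 := by positivity
  have h3 : (n.factorial : ℝ) ≠ 0 := by positivity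
  have h4 : ((n:ℝ) + 1) ≠ 0 := by positivity
  rw [Cf, Cf, pr_succ, pr_succ, pr_succ, Nat.factorial_succ]
  push_cast
  field_simp

lemma ratio_le {a b c : ℝ} (ha : 0 < a) (hb : 0 < b) (hc : 0 < c) (hab : a + b < c) (hc1 : c < 1)
    {n : ℕ} (hn : 2 * a * b + c * (c - a - b) ≤ (c - a - b) * n) (hn1 : 1 ≤ n) :
    (a + n) * (b + n) / ((c + n) * (n + 1)) ≤ ((n : ℝ) / (n + 1)) ^ (1 + (c - a - b) / 2) := by
  set t : ℝ := 1 + (c - a - b) / 2 with ht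
  have hδ : 0 < c - a - b := by linarith
  have hn1' : (1:ℝ) ≤ n := by exact_mod_cast hn1
  have hpos : (0:ℝ) < (c + n) * (n + 1) := by positivity
  have hB : 1 - t / ((n:ℝ) + 1) ≤ ((n:ℝ) / (n + 1)) ^ t := by
    have h1 : (-1 : ℝ) ≤ -(1 / ((n:ℝ) + 1)) := by
      rw [neg_le_neg_iff]
      have : (1:ℝ) ≤ (n:ℝ) + 1 := by linarith
      rw [div_le_one (by linarith)]; linarith
    have h2 : (1:ℝ) ≤ t := by rw [ht]; linarith
    have := one_add_mul_self_le_rpow_one_add h1 h2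
    have heq : (1:ℝ) + -(1 / ((n:ℝ) + 1)) = (n:ℝ) / (n + 1) := by
      field_simp
      ring
    rw [heq] at this
    calc 1 - t / ((n:ℝ) + 1) = 1 + t * -(1 / ((n:ℝ)+1)) := by ring
    _ ≤ _ := this
  have hkey : (a + n) * (b + n) ≤ (c + n) * (((n:ℝ) + 1) - t) := by
    rw [ht]; nlinarith
  have h3 : (a + n) * (b + n) / ((c + n) * (n + 1)) ≤ 1 - t / ((n:ℝ) + 1) := by
    rw [div_le_iff₀ hpos]
    calc (a + n) * (b + n) ≤ (c + n) * (((n:ℝ) + 1) - t) := hkey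
    _ = (1 - t / ((n:ℝ) + 1)) * ((c + n) * (n + 1)) := by
        field_simp
  exact h3.trans hB

lemma summable_Cf {a b c : ℝ} (ha : 0 < a) (hb : 0 < b) (hc : 0 < c) (hab : a + b < c)
    (hc1 : c < 1) : Summable (Cf a b c) := by
  set t : ℝ := 1 + (c - a - b) / 2 with ht
  have hδ : 0 < c - a - b := by linarith
  have ht1 : 1 < t := by rw [ht]; linarith
  obtain ⟨N, hN⟩ := exists_nat_ge ((2 * a * b + c * (c - a - b)) / (c - a - b) + 1)
  have hN1 : 1 ≤ N := by
    by_contra h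
    push_neg at h
    interval_cases N
    · simp only [Nat.cast_zero] at hN
      nlinarith [div_nonneg (by nlinarith : (0:ℝ) ≤ 2 * a * b + c * (c - a - b)) hδ.le]
  have hNc : ∀ n : ℕ, N ≤ n → 2 * a * b + c * (c - a - b) ≤ (c - a - b) * n := by
    intro n hn
    have h1 : ((2 * a * b + c * (c - a - b)) / (c - a - b)) ≤ (n:ℝ) := by
      have : (N:ℝ) ≤ n := by exact_mod_cast hn
      linarith
    calc 2 * a * b + c * (c - a - b) = ((2 * a * b + c * (c - a - b)) / (c - a - b)) * (c - a - b) := by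
          field_simp
    _ ≤ (n:ℝ) * (c - a - b) := by nlinarith
    _ = (c - a - b) * n := by ring
  -- monotone decreasing of Cf n * n ^ t for n ≥ N
  have step : ∀ n : ℕ, N ≤ n → Cf a b c (n+1) * ((n:ℝ)+1) ^ t ≤ Cf a b c n * (n:ℝ) ^ t := by
    intro n hn
    have hn1 : 1 ≤ n := le_trans hN1 hn
    have hn1' : (1:ℝ) ≤ (n:ℝ) := by exact_mod_cast hn1
    have hr := ratio_le ha hb hc hab hc1 (hNc n hn) hn1
    have hCn := Cf_pos ha hb hc n
    have hp1 : (0:ℝ) < (n:ℝ) + 1 := by linarith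
    calc Cf a b c (n+1) * ((n:ℝ)+1) ^ t
        = Cf a b c n * ((a + n) * (b + n) / ((c + n) * (n + 1))) * ((n:ℝ)+1) ^ t := by
          rw [Cf_succ hc]
    _ ≤ Cf a b c n * (((n:ℝ) / (n + 1)) ^ t) * ((n:ℝ)+1) ^ t := by
          have h2 : (0:ℝ) ≤ ((n:ℝ)+1) ^ t := (Real.rpow_pos_of_pos hp1 t).le
          nlinarith [mul_le_mul_of_nonneg_left hr hCn.le]
    _ = Cf a b c n * (n:ℝ) ^ t := by
          rw [mul_assoc, ← Real.mul_rpow (by positivity) hp1.le]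
          rw [div_mul_cancel₀]
          positivity
  have bound : ∀ m : ℕ, Cf a b c (N + m) * ((N:ℝ) + m) ^ t ≤ Cf a b c N * (N:ℝ) ^ t := by
    intro m
    induction m with
    | zero => simp
    | succ m ih =>
      have h1 := step (N + m) (Nat.le_add_right N m)
      have hcast : ((N + m : ℕ):ℝ) = (N:ℝ) + m := by push_cast; ring
      rw [hcast] at h1
      calc Cf a b c (N + (m+1)) * ((N:ℝ) + ((m:ℕ)+1:ℕ)) ^ t
          = Cf a b c ((N + m) + 1) * (((N:ℝ) + m) + 1) ^ t := by push_cast; ring_nf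
      _ ≤ Cf a b c (N + m) * ((N:ℝ) + m) ^ t := h1
      _ ≤ _ := ih
  set K : ℝ := Cf a b c N * (N:ℝ) ^ t with hK
  rw [← summable_nat_add_iff N]
  have hsum : Summable (fun m : ℕ => K / ((N:ℝ) + m) ^ t) := by
    have h0 : Summable (fun n : ℕ => 1 / (n:ℝ) ^ t) := Real.summable_one_div_nat_rpow.mpr ht1
    have h1 : Summable (fun m : ℕ => (fun n : ℕ => 1 / (n:ℝ) ^ t) (m + N)) :=
      (summable_nat_add_iff (f := fun n : ℕ => 1 / (n:ℝ) ^ t) N).mpr h0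
    simp only [] at h1
    have h2 : (fun m : ℕ => K / ((N:ℝ) + m) ^ t) = fun m : ℕ => K * (1 / ((m + N:ℕ):ℝ) ^ t) := by
      funext m
      rw [mul_one_div]
      congr 2
      push_cast; ring
    rw [h2]
    exact h1.mul_left K
  apply Summable.of_nonneg_of_le (fun m => (Cf_pos ha hb hc _).le) _ hsum
  intro m
  have hNm : (0:ℝ) < (N:ℝ) + m := by
    have : (1:ℝ) ≤ (N:ℝ) := by exact_mod_cast hN1
    positivity
  rw [le_div_iff₀ (Real.rpow_pos_of_pos hNm t)]
  calc Cf a b c (m + N) * ((N:ℝ) + (m:ℝ)) ^ t = Cf a b c (N + m) * ((N:ℝ) + m) ^ t := by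
        rw [Nat.add_comm m N]
  _ ≤ K := bound m
lemma Gamma_pr {x : ℝ} (hx : 0 < x) (n : ℕ) :
    Real.Gamma (x + n) = Real.Gamma x * pr x n := by
  induction n with
  | zero => simp [pr]
  | succ n ih =>
    have hne : x + (n:ℝ) ≠ 0 := by positivity
    have : x + ((n:ℕ)+1:ℕ) = (x + n) + 1 := by push_cast; ring
    rw [this, Real.Gamma_add_one hne, ih, pr_succ]
    ring

/-- The real Beta integrand as a function. -/
noncomputable def betaF (u v : ℝ) (t : ℝ) : ℝ := t ^ (u - 1) * (1 - t) ^ (v - 1)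

lemma betaF_eq_complex {u v : ℝ} {x : ℝ} (hx : 0 ≤ x) (hx1 : x ≤ 1) :
    ((betaF u v x : ℝ) : ℂ) = (x:ℂ) ^ ((u:ℂ) - 1) * (1 - (x:ℂ)) ^ ((v:ℂ) - 1) := by
  have h1 : ((u:ℂ) - 1) = ((u - 1 : ℝ) : ℂ) := by push_cast; ring
  have h2 : ((v:ℂ) - 1) = ((v - 1 : ℝ) : ℂ) := by push_cast; ring
  have h3 : (1 - (x:ℂ)) = ((1 - x : ℝ) : ℂ) := by push_cast; ring
  rw [h1, h2, h3, ← Complex.ofReal_cpow hx, ← Complex.ofReal_cpow (by linarith)]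
  push_cast [betaF]
  ring

lemma intervalIntegrable_betaF {u v : ℝ} (hu : 0 < u) (hv : 0 < v) :
    IntervalIntegrable (betaF u v) MeasureTheory.volume 0 1 := by
  have hc : IntervalIntegrable
      (fun x : ℝ => (x:ℂ) ^ ((u:ℂ) - 1) * (1 - (x:ℂ)) ^ ((v:ℂ) - 1))
      MeasureTheory.volume 0 1 :=
    Complex.betaIntegral_convergent (by simpa using hu) (by simpa using hv)
  have hre : IntervalIntegrable
      (fun x : ℝ => ((x:ℂ) ^ ((u:ℂ) - 1) * (1 - (x:ℂ)) ^ ((v:ℂ) - 1)).re)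
      MeasureTheory.volume 0 1 := by
    constructor
    · exact hc.1.re
    · exact hc.2.re
  apply hre.congr
  intro x hx
  rw [Set.uIoc_of_le (by norm_num : (0:ℝ) ≤ 1)] at hx
  have := betaF_eq_complex (u := u) (v := v) hx.1.le hx.2
  simp only []
  rw [← this, Complex.ofReal_re]

lemma real_beta {u v : ℝ} (hu : 0 < u) (hv : 0 < v) :
    ∫ t in (0:ℝ)..1, betaF u v t =
      Real.Gamma u * Real.Gamma v / Real.Gamma (u + v) := by
  have hc := Complex.Gamma_mul_Gamma_eq_betaIntegral
    (s := (u:ℂ)) (t := (v:ℂ)) (by simpa using hu) (by simpa using hv)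
  have hbeta : Complex.betaIntegral (u:ℂ) (v:ℂ) = ((∫ t in (0:ℝ)..1, betaF u v t : ℝ) : ℂ) := by
    rw [Complex.betaIntegral, ← intervalIntegral.integral_ofReal]
    apply intervalIntegral.integral_congr
    intro x hx
    rw [Set.uIcc_of_le (by norm_num : (0:ℝ) ≤ 1)] at hx
    exact (betaF_eq_complex hx.1 hx.2).symm
  rw [hbeta] at hc
  have huv : Real.Gamma (u + v) ≠ 0 := (Real.Gamma_pos_of_pos (by linarith)).ne'
  have h3 : ((u:ℂ) + (v:ℂ)) = ((u + v : ℝ) : ℂ) := by push_cast; ring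
  rw [h3, Complex.Gamma_ofReal, Complex.Gamma_ofReal, Complex.Gamma_ofReal,
    ← Complex.ofReal_mul, ← Complex.ofReal_mul] at hc
  have h2 := Complex.ofReal_inj.mp hc
  rw [eq_div_iff huv, mul_comm]
  linarith [h2]
lemma summable_shift (a : ℝ) (ha : 0 < a) {r : ℝ} (hr0 : 0 ≤ r) (hr : r < 1) (k : ℕ) :
    Summable (fun n : ℕ => pr a (n + k) / n.factorial * r ^ n) := by
  set ρ : ℝ := (1 + r) / 2 with hρ
  have hρ1 : ρ < 1 := by rw [hρ]; linarith
  have hρr : r < ρ := by rw [hρ]; linarith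
  obtain ⟨N, hN⟩ := exists_nat_ge ((r * (a + k) - ρ) / (ρ - r))
  apply summable_of_ratio_norm_eventually_le hρ1
  filter_upwards [eventually_ge_atTop N] with n hn
  have hn' : ((r * (a + k) - ρ) / (ρ - r)) ≤ (n:ℝ) := le_trans hN (by exact_mod_cast hn)
  have hterm : pr a (n + 1 + k) = pr a (n + k) * (a + n + k) := by
    have : n + 1 + k = (n + k) + 1 := by omega
    rw [this, pr_succ]
    push_cast; ring
  have hnn : (0:ℝ) ≤ pr a (n + k) / n.factorial * r ^ n :=
    mul_nonneg (div_nonneg (pr_pos ha _).le (by positivity)) (pow_nonneg hr0 n)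
  have hkey : (a + n + k) * r ≤ ρ * (n + 1) := by
    have h2 : 0 < ρ - r := by linarith
    have := (div_le_iff₀ h2).mp hn'
    nlinarith
  have e1 : pr a (n + 1 + k) / (n+1).factorial * r ^ (n+1)
      = (pr a (n + k) / n.factorial * r ^ n) * ((a + n + k) * r / (n + 1)) := by
    rw [hterm, Nat.factorial_succ]
    push_cast
    field_simp
    ring
  rw [Real.norm_eq_abs, Real.norm_eq_abs, e1, _root_.abs_mul]
  have habs : |pr a (n + k) / n.factorial * r ^ n| = pr a (n + k) / n.factorial * r ^ n := by
    rw [_root_.abs_of_nonneg hnn]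
  rw [habs]
  have h3 : |(a + n + k) * r / (n + 1)| ≤ ρ := by
    rw [_root_.abs_of_nonneg (by positivity), div_le_iff₀ (by positivity : (0:ℝ) < (n:ℝ)+1)]
    linarith
  calc pr a (n + k) / n.factorial * r ^ n * |(a + n + k) * r / (n + 1)|
      ≤ pr a (n + k) / n.factorial * r ^ n * ρ := by
        apply mul_le_mul_of_nonneg_left h3 hnn
  _ = ρ * (pr a (n + k) / n.factorial * r ^ n) := by ring
lemma summable_gterm (a : ℝ) (ha : 0 < a) {y r : ℝ} (hy : |y| ≤ r) (hr : r < 1) (k : ℕ) :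
    Summable (fun n : ℕ => pr a (n + k) / n.factorial * y ^ n) := by
  have hr0 : 0 ≤ r := le_trans (abs_nonneg y) hy
  apply Summable.of_norm_bounded (summable_shift a ha hr0 hr k)
  intro n
  rw [Real.norm_eq_abs, _root_.abs_mul, _root_.abs_pow,
    _root_.abs_of_nonneg (div_nonneg (pr_pos ha _).le (by positivity))]
  exact mul_le_mul_of_nonneg_left (pow_le_pow_left₀ (abs_nonneg y) hy n)
    (div_nonneg (pr_pos ha _).le (by positivity))

lemma summable_deriv_bound (a : ℝ) (ha : 0 < a) {r : ℝ} (hr0 : 0 ≤ r) (hr : r < 1) :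
    Summable (fun n : ℕ => pr a n / n.factorial * ((n:ℝ) * r ^ (n - 1))) := by
  rw [← summable_nat_add_iff 1]
  have : (fun n : ℕ => pr a (n+1) / (n+1).factorial * (((n:ℕ)+1:ℕ) * r ^ ((n+1) - 1)))
      = fun n : ℕ => pr a (n + 1) / n.factorial * r ^ n := by
    funext n
    have h1 : ((n+1).factorial : ℝ) = (n+1) * n.factorial := by
      rw [Nat.factorial_succ]; push_cast; ring
    rw [Nat.add_sub_cancel, h1]
    have h2 : ((n:ℝ)+1) ≠ 0 := by positivity
    have h3 : (n.factorial : ℝ) ≠ 0 := by positivity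
    field_simp
    push_cast; ring
  rw [this]
  exact summable_shift a ha hr0 hr 1

lemma deriv_term_bound (a : ℝ) (ha : 0 < a) {y r : ℝ} (hy : |y| ≤ r) (n : ℕ) :
    ‖pr a n / n.factorial * ((n:ℝ) * y ^ (n - 1))‖
      ≤ pr a n / n.factorial * ((n:ℝ) * r ^ (n - 1)) := by
  rw [Real.norm_eq_abs, _root_.abs_mul, _root_.abs_mul, _root_.abs_pow,
    _root_.abs_of_nonneg (div_nonneg (pr_pos ha _).le (by positivity)),
    _root_.abs_of_nonneg (by positivity : (0:ℝ) ≤ (n:ℝ))]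
  apply mul_le_mul_of_nonneg_left _ (div_nonneg (pr_pos ha _).le (by positivity))
  apply mul_le_mul_of_nonneg_left _ (by positivity)
  exact pow_le_pow_left₀ (abs_nonneg y) hy _

set_option maxHeartbeats 1000000 in
lemma binom {a : ℝ} (ha : 0 < a) {x : ℝ} (hx0 : 0 ≤ x) (hx : x < 1) :
    ∑' n : ℕ, pr a n / n.factorial * x ^ n = (1 - x) ^ (-a) := by
  set r : ℝ := (1 + x) / 2 with hrdef
  have hxr : x < r := by rw [hrdef]; linarith
  have hr1 : r < 1 := by rw [hrdef]; linarith
  have hr0 : (0:ℝ) < r := by rw [hrdef]; linarith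
  set s : Set ℝ := Set.Ioo (-r) r with hsdef
  set g : ℝ → ℝ := fun y => ∑' n : ℕ, pr a n / n.factorial * y ^ n with hgdef
  have mem0 : (0:ℝ) ∈ s := ⟨by linarith, hr0⟩
  have hxs : x ∈ s := ⟨by linarith, hxr⟩
  have hsum_at0 : Summable (fun n : ℕ => pr a n / n.factorial * (0:ℝ) ^ n) := by
    apply summable_of_ne_finset_zero (s := {0})
    intro n hn
    have : n ≠ 0 := by simpa using hn
    rw [zero_pow this, mul_zero]
  have hu' := summable_deriv_bound a ha hr0.le hr1
  have hderiv : ∀ y ∈ s, HasDerivAt g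
      (∑' n : ℕ, pr a n / n.factorial * ((n:ℝ) * y ^ (n - 1))) y := by
    intro y hy
    apply hasDerivAt_tsum_of_isPreconnected hu' isOpen_Ioo (convex_Ioo _ _).isPreconnected
      (fun n z _ => (hasDerivAt_pow n z).const_mul (pr a n / n.factorial))
      _ mem0 hsum_at0 hy
    intro n z hz
    exact deriv_term_bound a ha (by rw [_root_.abs_le]; exact ⟨hz.1.le, hz.2.le⟩) n
  -- functional equation
  have hfe : ∀ y ∈ s, (1 - y) * (∑' n : ℕ, pr a n / n.factorial * ((n:ℝ) * y ^ (n - 1)))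
      = a * g y := by
    intro y hy
    have hyr : |y| ≤ r := by rw [_root_.abs_le]; exact ⟨hy.1.le, hy.2.le⟩
    have hsum1 : Summable (fun n : ℕ => pr a (n + 1) / n.factorial * y ^ n) :=
      summable_gterm a ha hyr hr1 1
    have hsum0 : Summable (fun n : ℕ => pr a (n + 0) / n.factorial * y ^ n) :=
      summable_gterm a ha hyr hr1 0
    rw [show (fun n : ℕ => pr a (n + 0) / n.factorial * y ^ n)
      = fun n : ℕ => pr a n / n.factorial * y ^ n by funext n; rw [Nat.add_zero]] at hsum0
    set P : ℝ := ∑' n : ℕ, pr a (n + 1) / n.factorial * y ^ n with hPdef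
    set A : ℕ → ℝ := fun n => (n:ℝ) * pr a n / n.factorial * y ^ n with hAdef
    have hAshift : (fun n : ℕ => A (n + 1)) = fun n : ℕ => y * (pr a (n+1) / n.factorial * y ^ n) := by
      funext n
      rw [hAdef]
      have h1 : ((n+1).factorial : ℝ) = (n+1) * n.factorial := by
        rw [Nat.factorial_succ]; push_cast; ring
      simp only [h1]
      have h2 : ((n:ℝ)+1) ≠ 0 := by positivity
      have h3 : (n.factorial : ℝ) ≠ 0 := by positivity
      push_cast
      field_simp
      ring
    have hAsum : Summable A := by
      rw [← summable_nat_add_iff 1, hAshift]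
      exact hsum1.mul_left y
    have hDsum : Summable (fun n : ℕ => pr a n / n.factorial * ((n:ℝ) * y ^ (n - 1))) :=
      Summable.of_norm_bounded hu' (fun n => deriv_term_bound a ha hyr n)
    -- step 1 : deriv sum equals P
    have step1 : (∑' n : ℕ, pr a n / n.factorial * ((n:ℝ) * y ^ (n - 1))) = P := by
      rw [Summable.tsum_eq_zero_add hDsum]
      simp only [Nat.cast_zero, zero_mul, mul_zero, zero_add]
      rw [hPdef]
      congr 1
      funext n
      have h1 : ((n+1).factorial : ℝ) = (n+1) * n.factorial := by
        rw [Nat.factorial_succ]; push_cast; ring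
      rw [Nat.add_sub_cancel, h1]
      have h2 : ((n:ℝ)+1) ≠ 0 := by positivity
      have h3 : (n.factorial : ℝ) ≠ 0 := by positivity
      push_cast
      field_simp
    have step2 : y * P = ∑' n, A n := by
      have h0 : ∑' n, A n = A 0 + ∑' n, A (n+1) := Summable.tsum_eq_zero_add hAsum
      have hA0 : A 0 = 0 := by simp [hAdef]
      rw [h0, hA0, zero_add, hAshift, tsum_mul_left, hPdef]
    have step3 : P - a * g y = ∑' n, A n := by
      have e1 : a * g y = ∑' n, a * (pr a n / n.factorial * y ^ n) := by
        rw [hgdef, tsum_mul_left]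
      rw [hPdef, e1, ← Summable.tsum_sub hsum1 (hsum0.mul_left a)]
      congr 1
      funext n
      rw [hAdef, pr_succ]
      have h3 : (n.factorial : ℝ) ≠ 0 := by positivity
      field_simp
      ring
    rw [step1]
    linarith [step2, step3]
  -- h is constant
  set h : ℝ → ℝ := fun y => g y * (1 - y) ^ a with hhdef
  have hh : ∀ y ∈ s, HasDerivWithinAt h 0 s y := by
    intro y hy
    have h1y : (0:ℝ) < 1 - y := by have := hy.2; simp only [hsdef, Set.mem_Ioo] at hy; linarith
    have hg := hderiv y hy
    have hq : HasDerivAt (fun y : ℝ => (1 - y) ^ a) (-1 * a * (1 - y) ^ (a - 1)) y :=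
      HasDerivAt.rpow_const ((hasDerivAt_id y).const_sub 1) (Or.inl h1y.ne')
    have hprod := hg.mul hq
    set D : ℝ := ∑' n : ℕ, pr a n / n.factorial * ((n:ℝ) * y ^ (n - 1)) with hDdef
    have e : (1 - y) ^ a = (1 - y) ^ (a - 1) * (1 - y) := by
      nth_rewrite 1 [show a = (a - 1) + 1 by ring]
      rw [Real.rpow_add_one h1y.ne']
    have hzero : D * (1 - y) ^ a + g y * (-1 * a * (1 - y) ^ (a - 1)) = 0 := by
      rw [e]
      have hfy := hfe y hy
      rw [← hDdef] at hfy
      calc D * ((1 - y) ^ (a - 1) * (1 - y)) + g y * (-1 * a * (1 - y) ^ (a - 1))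
          = (1 - y) ^ (a - 1) * ((1 - y) * D - a * g y) := by ring
      _ = 0 := by rw [hfy]; ring
    rw [hzero] at hprod
    exact hprod.hasDerivWithinAt
  have hconst : h x = h 0 := by
    have hb := Convex.norm_image_sub_le_of_norm_hasDerivWithin_le
      (f := h) (f' := fun _ => (0:ℝ)) (C := 0) (fun y hy => hh y hy)
      (fun y _ => by simp) (convex_Ioo _ _) mem0 hxs
    have : ‖h x - h 0‖ ≤ 0 := by simpa using hb
    have := le_antisymm this (norm_nonneg _)
    rwa [norm_sub_eq_zero_iff] at this
  have hg0 : g 0 = 1 := by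
    have he : g 0 = ∑' n : ℕ, pr a n / n.factorial * (0:ℝ) ^ n := rfl
    rw [he, tsum_eq_single 0 (fun n hn => by rw [zero_pow hn, mul_zero])]
    simp [pr_zero]
  have hh0 : h 0 = 1 := by
    rw [hhdef]; simp only [sub_zero, Real.one_rpow, mul_one, hg0]
  have hne : (1 - x) ^ a ≠ 0 := (Real.rpow_pos_of_pos (by linarith : (0:ℝ) < 1 - x) a).ne'
  have hgx : g x * (1 - x) ^ a = 1 := hconst.trans hh0
  rw [Real.rpow_neg (by linarith : (0:ℝ) ≤ 1 - x), inv_eq_one_div, eq_div_iff hne]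
  exact hgx
lemma integral_Ioo_betaF {u v : ℝ} (hu : 0 < u) (hv : 0 < v) :
    ∫ t in Set.Ioo (0:ℝ) 1, betaF u v t = Real.Gamma u * Real.Gamma v / Real.Gamma (u + v) := by
  rw [← MeasureTheory.integral_Ioc_eq_integral_Ioo,
    ← intervalIntegral.integral_of_le (by norm_num : (0:ℝ) ≤ 1)]
  exact real_beta hu hv

lemma integrableOn_betaF {u v : ℝ} (hu : 0 < u) (hv : 0 < v) :
    IntegrableOn (betaF u v) (Set.Ioo (0:ℝ) 1) := by
  exact ((intervalIntegrable_betaF hu hv).1).mono_set Set.Ioo_subset_Ioc_self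

lemma gauss {a b c : ℝ} (ha : 0 < a) (hb : 0 < b) (hc : 0 < c) (hab : a + b < c) (hc1 : c < 1) :
    ∑' n, Cf a b c n =
      Real.Gamma c * Real.Gamma (c - a - b) / (Real.Gamma (c - a) * Real.Gamma (c - b)) := by
  have hbc : 0 < c - b := by linarith
  have hcab : 0 < c - a - b := by linarith
  have hca : 0 < c - a := by linarith
  set F : ℕ → ℝ → ℝ := fun n t => pr a n / n.factorial * betaF (b + n) (c - b) t with hF
  have hbn : ∀ n : ℕ, (0:ℝ) < b + n := fun n => by positivity
  -- integral of each term
  have hint : ∀ n : ℕ, ∫ t in Set.Ioo (0:ℝ) 1, F n t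
      = Cf a b c n * (Real.Gamma b * Real.Gamma (c - b) / Real.Gamma c) := by
    intro n
    rw [hF]
    simp only []
    rw [MeasureTheory.integral_const_mul, integral_Ioo_betaF (hbn n) hbc]
    have he : b + (n:ℝ) + (c - b) = c + n := by ring
    rw [he, Gamma_pr hb n, Gamma_pr hc n]
    have h1 : Real.Gamma c ≠ 0 := (Real.Gamma_pos_of_pos hc).ne'
    have h2 : pr c n ≠ 0 := (pr_pos hc n).ne'
    have h3 : (n.factorial : ℝ) ≠ 0 := by positivity
    rw [Cf]
    field_simp
  have hIntOn : ∀ n : ℕ, IntegrableOn (F n) (Set.Ioo (0:ℝ) 1) := by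
    intro n
    exact (integrableOn_betaF (hbn n) hbc).const_mul _
  have hnonneg : ∀ n : ℕ, ∀ t ∈ Set.Ioo (0:ℝ) 1, 0 ≤ F n t := by
    intro n t ht
    have h1 : (0:ℝ) < t := ht.1
    have h2 : (0:ℝ) < 1 - t := by have := ht.2; linarith
    rw [hF]
    simp only [betaF]
    have := pr_pos ha n
    positivity
  have hnorm : ∀ n : ℕ, (∫ t in Set.Ioo (0:ℝ) 1, ‖F n t‖)
      = ∫ t in Set.Ioo (0:ℝ) 1, F n t := by
    intro n
    apply MeasureTheory.setIntegral_congr_fun measurableSet_Ioo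
    intro t ht
    exact Real.norm_of_nonneg (hnonneg n t ht)
  have hsummable : Summable (fun n => ∫ t in Set.Ioo (0:ℝ) 1, ‖F n t‖) := by
    have : (fun n => ∫ t in Set.Ioo (0:ℝ) 1, ‖F n t‖)
        = fun n => Cf a b c n * (Real.Gamma b * Real.Gamma (c - b) / Real.Gamma c) := by
      funext n; rw [hnorm n, hint n]
    rw [this]
    exact (summable_Cf ha hb hc hab hc1).mul_right _
  have hswap := MeasureTheory.integral_tsum_of_summable_integral_norm hIntOn hsummable
  -- pointwise sum
  have hpt : ∀ t ∈ Set.Ioo (0:ℝ) 1, (∑' n, F n t) = betaF b (c - a - b) t := by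
    intro t ht
    have h1 : (0:ℝ) < t := ht.1
    have h2 : t < 1 := ht.2
    have h3 : (0:ℝ) < 1 - t := by linarith
    have hsplit : ∀ n : ℕ, F n t
        = (betaF b (c - b) t) * (pr a n / n.factorial * t ^ n) := by
      intro n
      rw [hF]
      simp only [betaF]
      have : t ^ (b + (n:ℝ) - 1) = t ^ (b - 1) * t ^ (n : ℕ) := by
        rw [← Real.rpow_natCast t n, ← Real.rpow_add h1]
        congr 1
        ring
      rw [this]
      ring
    calc (∑' n, F n t) = ∑' n, (betaF b (c - b) t) * (pr a n / n.factorial * t ^ n) := by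
          congr 1; funext n; exact hsplit n
    _ = (betaF b (c - b) t) * ∑' n, pr a n / n.factorial * t ^ n := tsum_mul_left
    _ = (betaF b (c - b) t) * (1 - t) ^ (-a) := by rw [binom ha h1.le h2]
    _ = betaF b (c - a - b) t := by
        simp only [betaF]
        rw [mul_assoc, ← Real.rpow_add h3]
        congr 2
        ring
  have hIright : ∫ t in Set.Ioo (0:ℝ) 1, (∑' n, F n t)
      = Real.Gamma b * Real.Gamma (c - a - b) / Real.Gamma (c - a) := by
    rw [MeasureTheory.setIntegral_congr_fun measurableSet_Ioo hpt]
    rw [integral_Ioo_betaF hb hcab]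
    congr 2
    ring
  -- conclude
  have hK : Real.Gamma b * Real.Gamma (c - b) / Real.Gamma c ≠ 0 := by
    have h1 := Real.Gamma_pos_of_pos hb
    have h2 := Real.Gamma_pos_of_pos hbc
    have h3 := Real.Gamma_pos_of_pos hc
    positivity
  have hfinal : (∑' n, Cf a b c n) * (Real.Gamma b * Real.Gamma (c - b) / Real.Gamma c)
      = Real.Gamma b * Real.Gamma (c - a - b) / Real.Gamma (c - a) := by
    rw [← tsum_mul_right]
    calc (∑' n, Cf a b c n * (Real.Gamma b * Real.Gamma (c - b) / Real.Gamma c))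
        = ∑' n, ∫ t in Set.Ioo (0:ℝ) 1, F n t := by
          congr 1; funext n; rw [hint n]
    _ = ∫ t in Set.Ioo (0:ℝ) 1, (∑' n, F n t) := hswap
    _ = _ := hIright
  have h1 := (Real.Gamma_pos_of_pos hb).ne'
  have h2 := (Real.Gamma_pos_of_pos hbc).ne'
  have h3 := (Real.Gamma_pos_of_pos hc).ne'
  have h4 := (Real.Gamma_pos_of_pos hca).ne'
  field_simp at hfinal
  rw [eq_div_iff (mul_ne_zero h4 h2)]
  apply mul_left_cancel₀ h1
  linear_combination Real.Gamma b * hfinal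
lemma Cf_nonneg {a b c : ℝ} (ha : 0 < a) (hb : 0 < b) (hc : 0 < c) (n : ℕ) :
    0 ≤ Cf a b c n := by
  have h1 := pr_pos ha n; have h2 := pr_pos hb n; have h3 := pr_pos hc n
  have h4 : (0:ℝ) < (n.factorial:ℝ) := by positivity
  exact le_of_lt (div_pos (mul_pos h1 h2) (mul_pos h3 h4))

lemma eval_ascPochhammer_ofReal (p : ℝ) (n : ℕ) :
    Polynomial.eval (p : ℂ) (ascPochhammer ℂ n) = ((pr p n : ℝ) : ℂ) := by
  rw [pr, ← ascPochhammer_map (algebraMap ℝ ℂ) n, Polynomial.eval_map]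
  exact Polynomial.eval₂_at_apply (algebraMap ℝ ℂ) p

lemma pow_bound {x : ℝ} (h0 : 0 ≤ x) (h1 : x ≤ 1) (n : ℕ) :
    (n : ℝ) * x ^ (n - 1) * (1 - x) ≤ 1 := by
  cases n with
  | zero => norm_num
  | succ n =>
    have hsum : ((n:ℝ) + 1) * x ^ n ≤ ∑ i ∈ Finset.range (n + 1), x ^ i := by
      have := Finset.card_nsmul_le_sum (Finset.range (n + 1)) (fun i => x ^ i) (x ^ n)
        (fun i hi => pow_le_pow_of_le_one h0 h1 (by
          simp only [Finset.mem_range] at hi; omega))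
      simpa [nsmul_eq_mul, add_comm] using this
    have hgeom : (∑ i ∈ Finset.range (n + 1), x ^ i) * (x - 1) = x ^ (n + 1) - 1 :=
      geom_sum_mul x (n + 1)
    have h2 : (1 - x) * (((n:ℝ) + 1) * x ^ n) ≤ (1 - x) * ∑ i ∈ Finset.range (n + 1), x ^ i :=
      mul_le_mul_of_nonneg_left hsum (by linarith)
    have h3 : (1 - x) * ∑ i ∈ Finset.range (n + 1), x ^ i = 1 - x ^ (n + 1) := by
      nlinarith [hgeom]
    have h4 : (0:ℝ) ≤ x ^ (n + 1) := pow_nonneg h0 _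
    calc ((n + 1 : ℕ):ℝ) * x ^ ((n + 1) - 1) * (1 - x)
        = (1 - x) * (((n:ℝ) + 1) * x ^ n) := by push_cast; ring
    _ ≤ 1 - x ^ (n + 1) := by linarith
    _ ≤ 1 := by linarith

section Complexside
variable {a b c : ℝ}

/-- The complex hypergeometric sum function. -/
noncomputable def Fc (a b c : ℝ) (z : ℂ) : ℂ := ∑' n : ℕ, ((Cf a b c n : ℝ) : ℂ) * z ^ n

lemma summable_Fc (ha : 0 < a) (hb : 0 < b) (hc : 0 < c) (hab : a + b < c) (hc1 : c < 1)
    {z : ℂ} (hz : ‖z‖ ≤ 1) : Summable (fun n : ℕ => ((Cf a b c n : ℝ) : ℂ) * z ^ n) := by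
  apply Summable.of_norm_bounded (summable_Cf ha hb hc hab hc1)
  intro n
  rw [norm_mul, norm_pow, Complex.norm_real, Real.norm_of_nonneg (Cf_nonneg ha hb hc n)]
  calc Cf a b c n * ‖z‖ ^ n ≤ Cf a b c n * 1 := by
        apply mul_le_mul_of_nonneg_left _ (Cf_nonneg ha hb hc n)
        exact pow_le_one₀ (norm_nonneg z) hz
  _ = Cf a b c n := mul_one _

lemma summable_deriv_bound_c (ha : 0 < a) (hb : 0 < b) (hc : 0 < c) (hab : a + b < c)
    (hc1 : c < 1) {r : ℝ} (hr0 : 0 < r) (hr1 : r < 1) :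
    Summable (fun n : ℕ => Cf a b c n / r * ((n:ℝ) * r ^ n)) := by
  have hM : ∀ n, Cf a b c n ≤ ∑' m, Cf a b c m :=
    fun n => Summable.le_tsum (summable_Cf ha hb hc hab hc1) n
      (fun m _ => Cf_nonneg ha hb hc m)
  set M : ℝ := ∑' m, Cf a b c m with hMdef
  apply Summable.of_nonneg_of_le
    (fun n => by
      have := Cf_nonneg ha hb hc n
      positivity)
    (fun n => ?_)
    (((summable_pow_mul_geometric_of_norm_lt_one 1 (by rwa [Real.norm_eq_abs, _root_.abs_of_pos hr0])).mul_left (M / r)))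
  · show Cf a b c n / r * ((n:ℝ) * r ^ n) ≤ M / r * ((n:ℝ) ^ 1 * r ^ n)
    rw [pow_one]
    have hn : (0:ℝ) ≤ (n:ℝ) * r ^ n := by positivity
    apply mul_le_mul_of_nonneg_right _ hn
    exact div_le_div_of_nonneg_right (hM n) hr0.le
end Complexside
section D
variable {a b c : ℝ}

/-- Derivative of `Fc`. -/
noncomputable def DFc (a b c : ℝ) (z : ℂ) : ℂ :=
  ∑' n : ℕ, ((Cf a b c n : ℝ) : ℂ) * ((n : ℂ) * z ^ (n - 1))

lemma hasDerivAt_Fc (ha : 0 < a) (hb : 0 < b) (hc : 0 < c) (hab : a + b < c) (hc1 : c < 1)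
    {z : ℂ} (hz : ‖z‖ < 1) : HasDerivAt (Fc a b c) (DFc a b c z) z := by
  set r : ℝ := (‖z‖ + 1) / 2 with hrdef
  have hr0 : 0 < r := by have := norm_nonneg z; rw [hrdef]; positivity
  have hr1 : r < 1 := by rw [hrdef]; linarith
  have hzr : ‖z‖ < r := by rw [hrdef]; linarith
  have hball : z ∈ Metric.ball (0:ℂ) r := by
    rwa [Metric.mem_ball, dist_zero_right]
  have h0ball : (0:ℂ) ∈ Metric.ball (0:ℂ) r := by
    rwa [Metric.mem_ball, dist_self]
  have hsum0 : Summable (fun n : ℕ => ((Cf a b c n : ℝ) : ℂ) * (0:ℂ) ^ n) := by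
    apply summable_of_ne_finset_zero (s := {0})
    intro n hn
    have : n ≠ 0 := by simpa using hn
    rw [zero_pow this, mul_zero]
  apply hasDerivAt_tsum_of_isPreconnected
    (summable_deriv_bound_c ha hb hc hab hc1 hr0 hr1) Metric.isOpen_ball
    ((convex_ball (0:ℂ) r).isPreconnected)
    (fun n w _ => (hasDerivAt_pow n w).const_mul (((Cf a b c n : ℝ) : ℂ)))
    _ h0ball hsum0 hball
  intro n w hw
  rw [Metric.mem_ball, dist_zero_right] at hw
  rw [norm_mul, norm_mul, Complex.norm_real, Real.norm_of_nonneg (Cf_nonneg ha hb hc n),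
    Complex.norm_natCast, norm_pow]
  have h1 : ‖w‖ ^ (n - 1) ≤ r ^ (n - 1) := pow_le_pow_left₀ (norm_nonneg w) hw.le _
  have hCnn := Cf_nonneg ha hb hc n
  calc Cf a b c n * ((n:ℝ) * ‖w‖ ^ (n - 1))
      ≤ Cf a b c n * ((n:ℝ) * r ^ (n - 1)) := by
        apply mul_le_mul_of_nonneg_left _ hCnn
        exact mul_le_mul_of_nonneg_left h1 (by positivity)
  _ ≤ Cf a b c n / r * ((n:ℝ) * r ^ n) := by
      cases n with
      | zero => simp
      | succ n =>
        rw [Nat.add_sub_cancel]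
        have : Cf a b c n.succ / r * (((n.succ):ℝ) * r ^ (n+1))
            = Cf a b c n.succ * ((n.succ:ℝ) * r ^ n) * (r ^ 1 / r) := by
          ring
        rw [this, pow_one, div_self hr0.ne', mul_one]
end D
local notation "L01" => (𝓝[Set.Ioo (0 : ℝ) 1] (1:ℝ))

lemma tendsto_ofReal_one : Tendsto (fun x : ℝ => (x : ℂ)) L01 (𝓝 1) := by
  have h := (Complex.continuous_ofReal.tendsto 1)
  exact h.mono_left nhdsWithin_le_nhds

lemma tendsto_cpow_one (p : ℂ) : Tendsto (fun x : ℝ => (x : ℂ) ^ p) L01 (𝓝 1) := by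
  have hc : ContinuousAt (fun z : ℂ => z ^ p) 1 :=
    continuousAt_cpow_const (by simp [Complex.mem_slitPlane_iff])
  have := hc.tendsto.comp tendsto_ofReal_one
  rwa [Complex.one_cpow] at this

lemma tendsto_Fc {a b c : ℝ} (ha : 0 < a) (hb : 0 < b) (hc : 0 < c) (hab : a + b < c)
    (hc1 : c < 1) :
    Tendsto (fun x : ℝ => Fc a b c (x : ℂ)) L01 (𝓝 (((∑' n, Cf a b c n : ℝ) : ℂ))) := by
  rw [Complex.ofReal_tsum]
  apply tendsto_tsum_of_dominated_convergence (bound := Cf a b c)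
    (summable_Cf ha hb hc hab hc1)
  · intro k
    have h1 : Tendsto (fun x : ℝ => ((Cf a b c k : ℝ):ℂ) * (x:ℂ) ^ k) L01
        (𝓝 (((Cf a b c k : ℝ):ℂ) * 1 ^ k)) :=
      tendsto_const_nhds.mul (tendsto_ofReal_one.pow k)
    simpa using h1
  · filter_upwards [self_mem_nhdsWithin] with x hx
    intro k
    rw [norm_mul, norm_pow, Complex.norm_real, Real.norm_of_nonneg (Cf_nonneg ha hb hc k),
      Complex.norm_real, Real.norm_of_nonneg hx.1.le]
    calc Cf a b c k * x ^ k ≤ Cf a b c k * 1 :=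
          mul_le_mul_of_nonneg_left (pow_le_one₀ hx.1.le hx.2.le) (Cf_nonneg ha hb hc k)
    _ = Cf a b c k := mul_one _

lemma tendsto_oneSub_mul_DFc {a b c : ℝ} (ha : 0 < a) (hb : 0 < b) (hc : 0 < c)
    (hab : a + b < c) (hc1 : c < 1) :
    Tendsto (fun x : ℝ => (1 - (x:ℂ)) * DFc a b c (x : ℂ)) L01 (𝓝 0) := by
  have heq : ∀ x : ℝ, (1 - (x:ℂ)) * DFc a b c (x : ℂ)
      = ∑' n : ℕ, (1 - (x:ℂ)) * (((Cf a b c n : ℝ):ℂ) * ((n:ℂ) * (x:ℂ) ^ (n - 1))) := by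
    intro x
    rw [DFc, tsum_mul_left]
  rw [show (0:ℂ) = ∑' _ : ℕ, (0:ℂ) by rw [tsum_zero]]
  apply Tendsto.congr (fun x => (heq x).symm)
  apply tendsto_tsum_of_dominated_convergence (bound := Cf a b c)
    (summable_Cf ha hb hc hab hc1)
  · intro k
    have h1 : Tendsto (fun x : ℝ => (1 - (x:ℂ)) *
        (((Cf a b c k : ℝ):ℂ) * ((k:ℂ) * (x:ℂ) ^ (k - 1)))) L01
        (𝓝 ((1 - 1) * (((Cf a b c k : ℝ):ℂ) * ((k:ℂ) * 1 ^ (k - 1))))) :=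
      (tendsto_const_nhds.sub tendsto_ofReal_one).mul
        (tendsto_const_nhds.mul (tendsto_const_nhds.mul (tendsto_ofReal_one.pow (k - 1))))
    simpa using h1
  · filter_upwards [self_mem_nhdsWithin] with x hx
    intro k
    have h0 := hx.1.le
    have h1 := hx.2.le
    rw [norm_mul, norm_mul, norm_mul, norm_pow, Complex.norm_real,
      Real.norm_of_nonneg (Cf_nonneg ha hb hc k), Complex.norm_natCast,
      Complex.norm_real, Real.norm_of_nonneg h0]
    have hns : ‖(1:ℂ) - (x:ℂ)‖ = 1 - x := by
      rw [show (1:ℂ) - (x:ℂ) = ((1 - x : ℝ):ℂ) by push_cast; ring, Complex.norm_real,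
        Real.norm_of_nonneg (by linarith)]
    rw [hns]
    calc (1 - x) * (Cf a b c k * ((k:ℝ) * x ^ (k - 1)))
        = Cf a b c k * ((k:ℝ) * x ^ (k - 1) * (1 - x)) := by ring
    _ ≤ Cf a b c k * 1 :=
        mul_le_mul_of_nonneg_left (pow_bound h0 h1 k) (Cf_nonneg ha hb hc k)
    _ = Cf a b c k := mul_one _
lemma cpow_add3 {z : ℂ} (hz : z ≠ 0) (p q r t : ℂ) (h : p + q + r = t) :
    z ^ p * z ^ q * z ^ r = z ^ t := by
  rw [← Complex.cpow_add _ _ hz, ← Complex.cpow_add _ _ hz, h]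

lemma cpow_add2 {z : ℂ} (hz : z ≠ 0) (p q t : ℂ) (h : p + q = t) :
    z ^ p * z ^ q = z ^ t := by
  rw [← Complex.cpow_add _ _ hz, h]


end Stmt6

open Stmt6 in
/-- with `θ = Γ(γ)Γ(γ−α−β)/(Γ(γ−α)Γ(γ−β))`, as the real variable `x` tends to `1`
from the left within `(0,1)`, one has `u₀(x)² (1−x)^{−(1+α+β−γ)} → θ²`,
`y₀(x) (1−x)^{γ−α−β} → −(θ²/2)(α+β−γ+1)`, `y₁(x) (1−x)^{γ−α−β} → −(θ²/2)(α+β−γ+1)`, and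
`y₂(x) (1−x)^{γ−α−β} → −(θ²/2)(α+β−γ−1)`. -/
theorem stmt_6 (α β γ : ℚ)
    (hα : ∃ n : ℕ, 0 < n ∧ α = 1 / n) (hβ : ∃ n : ℕ, 0 < n ∧ β = 1 / n)
    (hγ : ∃ n : ℕ, 0 < n ∧ γ = 1 / n)
    (h0 : 0 < α) (h1 : α < β) (h2 : β < γ) (h3 : γ < 1) (h4 : α + β < γ)
    (θ : ℂ)
    (hθ : θ = Complex.Gamma (γ : ℂ) * Complex.Gamma ((γ : ℂ) - (α : ℂ) - (β : ℂ)) /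
        (Complex.Gamma ((γ : ℂ) - (α : ℂ)) * Complex.Gamma ((γ : ℂ) - (β : ℂ)))) :
    Tendsto (fun x : ℝ => (hypu0 α β γ (x : ℂ)) ^ 2 *
        ((1 : ℂ) - (x : ℂ)) ^ (-(1 + (α : ℂ) + (β : ℂ) - (γ : ℂ))))
      (𝓝[Set.Ioo (0 : ℝ) 1] 1) (𝓝 (θ ^ 2)) ∧
    Tendsto (fun x : ℝ => yfun0 (hypu0 α β γ) (x : ℂ) *
        ((1 : ℂ) - (x : ℂ)) ^ ((γ : ℂ) - (α : ℂ) - (β : ℂ)))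
      (𝓝[Set.Ioo (0 : ℝ) 1] 1) (𝓝 (-(θ ^ 2 / 2) * ((α : ℂ) + (β : ℂ) - (γ : ℂ) + 1))) ∧
    Tendsto (fun x : ℝ => yfun1 (hypu0 α β γ) (x : ℂ) *
        ((1 : ℂ) - (x : ℂ)) ^ ((γ : ℂ) - (α : ℂ) - (β : ℂ)))
      (𝓝[Set.Ioo (0 : ℝ) 1] 1) (𝓝 (-(θ ^ 2 / 2) * ((α : ℂ) + (β : ℂ) - (γ : ℂ) + 1))) ∧
    Tendsto (fun x : ℝ => yfun2 (hypu0 α β γ) (x : ℂ) *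
        ((1 : ℂ) - (x : ℂ)) ^ ((γ : ℂ) - (α : ℂ) - (β : ℂ)))
      (𝓝[Set.Ioo (0 : ℝ) 1] 1) (𝓝 (-(θ ^ 2 / 2) * ((α : ℂ) + (β : ℂ) - (γ : ℂ) - 1))) := by
  -- real parameters
  set a : ℝ := (α : ℝ) with hadef
  set b : ℝ := (β : ℝ) with hbdef
  set c : ℝ := (γ : ℝ) with hcdef
  have ha : 0 < a := by rw [hadef]; exact_mod_cast h0
  have hb : 0 < b := by rw [hbdef]; exact_mod_cast lt_trans h0 h1
  have hc : 0 < c := by rw [hcdef]; exact_mod_cast lt_trans (lt_trans h0 h1) h2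
  have hab : a + b < c := by rw [hadef, hbdef, hcdef]; exact_mod_cast h4
  have hc1 : c < 1 := by rw [hcdef]; exact_mod_cast h3
  -- complex casts
  have hca : ((a : ℝ) : ℂ) = (α : ℂ) := by rw [hadef]; push_cast; ring
  have hcb : ((b : ℝ) : ℂ) = (β : ℂ) := by rw [hbdef]; push_cast; ring
  have hcc : ((c : ℝ) : ℂ) = (γ : ℂ) := by rw [hcdef]; push_cast; ring
  -- hyp2F1 is Fc
  have hFeq : hyp2F1 (α : ℂ) (β : ℂ) (γ : ℂ) = Fc a b c := by
    funext z
    rw [hyp2F1, Fc]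
    congr 1
    funext n
    rw [← hca, ← hcb, ← hcc, eval_ascPochhammer_ofReal, eval_ascPochhammer_ofReal,
      eval_ascPochhammer_ofReal, Cf]
    push_cast
    ring
  -- θ as a real constant
  set S : ℝ := ∑' n, Cf a b c n with hS
  have hθS : θ = ((S : ℝ) : ℂ) := by
    rw [hθ, hS, gauss ha hb hc hab hc1]
    have e1 : (γ:ℂ) = ((c:ℝ):ℂ) := hcc.symm
    have e2 : (γ:ℂ) - (α:ℂ) - (β:ℂ) = ((c - a - b : ℝ):ℂ) := by
      rw [← hca, ← hcb, ← hcc]; push_cast; ring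
    have e3 : (γ:ℂ) - (α:ℂ) = ((c - a : ℝ):ℂ) := by
      rw [← hca, ← hcc]; push_cast; ring
    have e4 : (γ:ℂ) - (β:ℂ) = ((c - b : ℝ):ℂ) := by
      rw [← hcb, ← hcc]; push_cast; ring
    rw [e2, e3, e4, e1, Complex.Gamma_ofReal, Complex.Gamma_ofReal, Complex.Gamma_ofReal,
      Complex.Gamma_ofReal]
    push_cast
    ring
  set g2 : ℂ := (γ : ℂ) / 2 with hg2
  set s2 : ℂ := ((α : ℂ) + (β : ℂ) - (γ : ℂ) + 1) / 2 with hs2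
  set wc : ℂ := (γ : ℂ) - (α : ℂ) - (β : ℂ) with hwc
  have hU : hypu0 α β γ = fun z : ℂ => z ^ g2 * (1 - z) ^ s2 * Fc a b c z := by
    funext z
    rw [hypu0, hFeq]
  -- derivative of u0
  have hder : ∀ x : ℝ, x ∈ Set.Ioo (0:ℝ) 1 → HasDerivAt (hypu0 α β γ)
      (g2 * (x:ℂ) ^ (g2 - 1) * (1 - (x:ℂ)) ^ s2 * Fc a b c (x:ℂ)
        - s2 * (x:ℂ) ^ g2 * (1 - (x:ℂ)) ^ (s2 - 1) * Fc a b c (x:ℂ)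
        + (x:ℂ) ^ g2 * (1 - (x:ℂ)) ^ s2 * DFc a b c (x:ℂ)) (x:ℂ) := by
    intro x hx
    rw [hU]
    have hslit1 : (x:ℂ) ∈ Complex.slitPlane := by
      rw [Complex.mem_slitPlane_iff]
      left
      simpa using hx.1
    have hslit2 : (1:ℂ) - (x:ℂ) ∈ Complex.slitPlane := by
      rw [Complex.mem_slitPlane_iff]
      left
      simp only [Complex.sub_re, Complex.one_re, Complex.ofReal_re]
      linarith [hx.2]
    have hx1 : HasDerivAt (fun z : ℂ => z ^ g2) (g2 * (x:ℂ) ^ (g2 - 1) * 1) (x:ℂ) :=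
      (hasDerivAt_id ((x:ℂ))).cpow_const hslit1
    have hx2 : HasDerivAt (fun z : ℂ => (1 - z) ^ s2)
        (s2 * (1 - (x:ℂ)) ^ (s2 - 1) * (-1)) (x:ℂ) :=
      (((hasDerivAt_id ((x:ℂ))).const_sub 1)).cpow_const hslit2
    have hx3 : HasDerivAt (Fc a b c) (DFc a b c (x:ℂ)) (x:ℂ) := by
      apply hasDerivAt_Fc ha hb hc hab hc1
      rw [Complex.norm_real, Real.norm_of_nonneg hx.1.le]
      exact hx.2
    have : HasDerivAt (fun z : ℂ => z ^ g2 * (1 - z) ^ s2 * Fc a b c z) _ (x:ℂ) :=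
      (hx1.fun_mul hx2).fun_mul hx3
    convert this using 1
    ring
  -- basic tendsto facts
  have tGθ : Tendsto (fun x : ℝ => Fc a b c (x:ℂ)) (𝓝[Set.Ioo (0:ℝ) 1] 1) (𝓝 θ) := by
    rw [hθS, hS]
    exact tendsto_Fc ha hb hc hab hc1
  have tOD := tendsto_oneSub_mul_DFc ha hb hc hab hc1
  have tO : Tendsto (fun x : ℝ => (1:ℂ) - (x:ℂ)) (𝓝[Set.Ioo (0:ℝ) 1] 1) (𝓝 0) := by
    have h := tendsto_const_nhds (x := (1:ℂ)) (f := 𝓝[Set.Ioo (0:ℝ) 1] (1:ℝ)) |>.sub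
      tendsto_ofReal_one
    simpa using h
  have hXne : ∀ x : ℝ, x ∈ Set.Ioo (0:ℝ) 1 → ((x:ℂ)) ≠ 0 := fun x hx =>
    Complex.ofReal_ne_zero.mpr hx.1.ne'
  have hOne : ∀ x : ℝ, x ∈ Set.Ioo (0:ℝ) 1 → (1:ℂ) - (x:ℂ) ≠ 0 := by
    intro x hx
    have he : ((1 - x : ℝ):ℂ) = 1 - (x:ℂ) := by push_cast; ring
    rw [← he]
    exact Complex.ofReal_ne_zero.mpr (by have := hx.2; linarith : (1:ℝ) - x ≠ 0)
  have hsumO : s2 + s2 + wc = 1 := by rw [hs2, hwc]; ring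
  have hsum1 : (s2 - 1) + s2 + wc = 0 := by rw [hs2, hwc]; ring
  have hsumT1 : s2 + s2 + (-(1 + (α:ℂ) + (β:ℂ) - (γ:ℂ))) = 0 := by rw [hs2]; ring
  -- group limits
  have tgrpO : Tendsto (fun x : ℝ => (1-(x:ℂ))^s2 * (1-(x:ℂ))^s2 * (1-(x:ℂ))^wc)
      (𝓝[Set.Ioo (0:ℝ) 1] 1) (𝓝 0) := by
    apply tO.congr'
    filter_upwards [self_mem_nhdsWithin] with x hx
    rw [cpow_add3 (hOne x hx) s2 s2 wc 1 hsumO, Complex.cpow_one]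
  have tgrp1 : Tendsto (fun x : ℝ => (1-(x:ℂ))^(s2-1) * (1-(x:ℂ))^s2 * (1-(x:ℂ))^wc)
      (𝓝[Set.Ioo (0:ℝ) 1] 1) (𝓝 1) := by
    apply tendsto_const_nhds.congr'
    filter_upwards [self_mem_nhdsWithin] with x hx
    rw [cpow_add3 (hOne x hx) (s2-1) s2 wc 0 hsum1, Complex.cpow_zero]
  have tgrpT1 : Tendsto (fun x : ℝ =>
      (1-(x:ℂ))^s2 * (1-(x:ℂ))^s2 * (1-(x:ℂ))^(-(1 + (α:ℂ) + (β:ℂ) - (γ:ℂ))))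
      (𝓝[Set.Ioo (0:ℝ) 1] 1) (𝓝 1) := by
    apply tendsto_const_nhds.congr'
    filter_upwards [self_mem_nhdsWithin] with x hx
    rw [cpow_add3 (hOne x hx) s2 s2 _ 0 hsumT1, Complex.cpow_zero]
  have tgrpOD : Tendsto (fun x : ℝ =>
      (1-(x:ℂ))^s2 * (1-(x:ℂ))^s2 * (1-(x:ℂ))^wc * DFc a b c (x:ℂ))
      (𝓝[Set.Ioo (0:ℝ) 1] 1) (𝓝 0) := by
    apply tOD.congr'
    filter_upwards [self_mem_nhdsWithin] with x hx
    rw [cpow_add3 (hOne x hx) s2 s2 wc 1 hsumO, Complex.cpow_one]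
  have tXdiv : Tendsto (fun x : ℝ => (x:ℂ)^g2 * (x:ℂ)^g2 / (x:ℂ))
      (𝓝[Set.Ioo (0:ℝ) 1] 1) (𝓝 1) := by
    apply (tendsto_cpow_one ((γ:ℂ) - 1)).congr'
    filter_upwards [self_mem_nhdsWithin] with x hx
    rw [cpow_add2 (hXne x hx) g2 g2 (γ:ℂ) (by rw [hg2]; ring),
      ← cpow_add2 (hXne x hx) ((γ:ℂ)-1) 1 (γ:ℂ) (by ring), Complex.cpow_one,
      mul_div_cancel_right₀ _ (hXne x hx)]
  have tgrpdiv : Tendsto (fun x : ℝ =>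
      (1-(x:ℂ))^s2 * (1-(x:ℂ))^s2 * (1-(x:ℂ))^wc / ((x:ℂ) - 1))
      (𝓝[Set.Ioo (0:ℝ) 1] 1) (𝓝 (-1)) := by
    apply tendsto_const_nhds.congr'
    filter_upwards [self_mem_nhdsWithin] with x hx
    rw [cpow_add3 (hOne x hx) s2 s2 wc 1 hsumO, Complex.cpow_one]
    have hne : ((x:ℂ)) - 1 ≠ 0 := by
      intro h
      exact hOne x hx (by rw [← neg_sub]; simpa using congrArg Neg.neg h)
    field_simp
    ring
  -- term limits for the y-functions
  have t1 : Tendsto (fun x : ℝ => g2 * ((x:ℂ)^(g2-1) * (x:ℂ)^g2) *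
      ((1-(x:ℂ))^s2 * (1-(x:ℂ))^s2 * (1-(x:ℂ))^wc) * (Fc a b c (x:ℂ))^2)
      (𝓝[Set.Ioo (0:ℝ) 1] 1) (𝓝 (g2 * (1 * 1) * 0 * θ^2)) :=
    ((tendsto_const_nhds.mul ((tendsto_cpow_one (g2-1)).mul (tendsto_cpow_one g2))).mul
      tgrpO).mul (tGθ.pow 2)
  have t2 : Tendsto (fun x : ℝ => s2 * ((x:ℂ)^g2 * (x:ℂ)^g2) *
      ((1-(x:ℂ))^(s2-1) * (1-(x:ℂ))^s2 * (1-(x:ℂ))^wc) * (Fc a b c (x:ℂ))^2)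
      (𝓝[Set.Ioo (0:ℝ) 1] 1) (𝓝 (s2 * (1 * 1) * 1 * θ^2)) :=
    ((tendsto_const_nhds.mul ((tendsto_cpow_one g2).mul (tendsto_cpow_one g2))).mul
      tgrp1).mul (tGθ.pow 2)
  have t3 : Tendsto (fun x : ℝ => ((x:ℂ)^g2 * (x:ℂ)^g2) * Fc a b c (x:ℂ) *
      ((1-(x:ℂ))^s2 * (1-(x:ℂ))^s2 * (1-(x:ℂ))^wc * DFc a b c (x:ℂ)))
      (𝓝[Set.Ioo (0:ℝ) 1] 1) (𝓝 ((1 * 1) * θ * 0)) :=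
    (((tendsto_cpow_one g2).mul (tendsto_cpow_one g2)).mul tGθ).mul tgrpOD
  -- Statement 1
  refine ⟨?_, ?_, ?_, ?_⟩
  · have hT : Tendsto (fun x : ℝ => ((x:ℂ)^g2 * (x:ℂ)^g2) * (Fc a b c (x:ℂ))^2 *
        ((1-(x:ℂ))^s2 * (1-(x:ℂ))^s2 * (1-(x:ℂ))^(-(1 + (α:ℂ) + (β:ℂ) - (γ:ℂ)))))
        (𝓝[Set.Ioo (0:ℝ) 1] 1) (𝓝 ((1 * 1) * θ^2 * 1)) :=
      (((tendsto_cpow_one g2).mul (tendsto_cpow_one g2)).mul (tGθ.pow 2)).mul tgrpT1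
    rw [show θ^2 = (1 * 1) * θ^2 * 1 by ring]
    apply Tendsto.congr' _ hT
    filter_upwards [self_mem_nhdsWithin] with x hx
    simp only [hU]
    ring
  · rw [show -(θ^2/2) * ((α:ℂ) + (β:ℂ) - (γ:ℂ) + 1)
      = g2 * (1 * 1) * 0 * θ^2 - s2 * (1 * 1) * 1 * θ^2 + (1 * 1) * θ * 0 by
        rw [hg2, hs2]; ring]
    apply Tendsto.congr' _ ((t1.sub t2).add t3)
    filter_upwards [self_mem_nhdsWithin] with x hx
    have hdx := (hder x hx).deriv
    simp only [yfun0]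
    rw [hdx]
    simp only [hU]
    ring
  · have textra : Tendsto (fun x : ℝ => (x:ℂ)^g2 * (x:ℂ)^g2 / (x:ℂ) *
        ((1-(x:ℂ))^s2 * (1-(x:ℂ))^s2 * (1-(x:ℂ))^wc) * (Fc a b c (x:ℂ))^2)
        (𝓝[Set.Ioo (0:ℝ) 1] 1) (𝓝 (1 * 0 * θ^2)) :=
      (tXdiv.mul tgrpO).mul (tGθ.pow 2)
    rw [show -(θ^2/2) * ((α:ℂ) + (β:ℂ) - (γ:ℂ) + 1)
      = g2 * (1 * 1) * 0 * θ^2 - s2 * (1 * 1) * 1 * θ^2 + (1 * 1) * θ * 0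
        - 1 * 0 * θ^2 by rw [hg2, hs2]; ring]
    apply Tendsto.congr' _ (((t1.sub t2).add t3).sub textra)
    filter_upwards [self_mem_nhdsWithin] with x hx
    have hdx := (hder x hx).deriv
    simp only [yfun1]
    rw [hdx]
    simp only [hU]
    ring
  · have textra : Tendsto (fun x : ℝ => ((x:ℂ)^g2 * (x:ℂ)^g2) *
        ((1-(x:ℂ))^s2 * (1-(x:ℂ))^s2 * (1-(x:ℂ))^wc / ((x:ℂ) - 1)) * (Fc a b c (x:ℂ))^2)
        (𝓝[Set.Ioo (0:ℝ) 1] 1) (𝓝 ((1 * 1) * (-1) * θ^2)) :=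
      ((((tendsto_cpow_one g2).mul (tendsto_cpow_one g2))).mul tgrpdiv).mul (tGθ.pow 2)
    rw [show -(θ^2/2) * ((α:ℂ) + (β:ℂ) - (γ:ℂ) - 1)
      = g2 * (1 * 1) * 0 * θ^2 - s2 * (1 * 1) * 1 * θ^2 + (1 * 1) * θ * 0
        - (1 * 1) * (-1) * θ^2 by rw [hg2, hs2]; ring]
    apply Tendsto.congr' _ (((t1.sub t2).add t3).sub textra)
    filter_upwards [self_mem_nhdsWithin] with x hx
    have hdx := (hder x hx).deriv
    simp only [yfun2]
    rw [hdx]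
    simp only [hU]
    ring
end
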